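/- arXiv:1309.2237 — 11 statements merged into one kernel-verified Lean document; each statement's English description precedes it below -/
import Mathlib

section
/- Let G be a finite group and let g be a non-central element of G whose centralizer C_G(g) is abelian. Then g is not a vertex of any forbidden subgraph of the commuting graph Γ(G); that is, for every subset S of G∖Z(G) containing g, the induced subgraph of Γ(G) on S is not isomorphic to a cycle of odd length at least 5, nor to the complement of such a cycle. -/
open SimpleGraph

/-- A simple graph is *perfect* if every induced subgraph has chromatic number
equal to its clique number. -/
def SimpleGraph.IsPerfectGraph {V : Type*} (G : SimpleGraph V) : Prop :=
  ∀ s : Set V, (G.induce s).chromaticNumber = ((G.induce s).cliqueNum : ℕ∞)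

/-- The commuting graph of a group `G`: vertices are the non-central elements of `G`,
with distinct vertices joined by an edge whenever they commute. -/
def commGraph (G : Type*) [Group G] :
    SimpleGraph {g : G // g ∉ Subgroup.center G} where
  Adj x y := x ≠ y ∧ Commute (x : G) (y : G)
  symm := ⟨fun _ _ h => ⟨h.1.symm, h.2.symm⟩⟩
  loopless := ⟨fun _ h => h.1 rfl⟩

/-- A set `S` of vertices carries a *forbidden subgraph* of `Γ` if the induced
subgraph on `S` is isomorphic to a cycle of odd length at least `5`, or to the
complement of such a cycle. -/
def SimpleGraph.IsForbidden {V : Type*} (Γ : SimpleGraph V) (S : Set V) : Prop :=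
  ∃ n : ℕ, Odd n ∧ 5 ≤ n ∧
    (Nonempty (Γ.induce S ≃g cycleGraph n) ∨ Nonempty (Γ.induce S ≃g (cycleGraph n)ᶜ))

open Fin.NatCast Fin.CommRing in
theorem not_mem_forbidden_of_abelian_centralizer
    (G : Type*) [Group G] [Finite G] (g : G) (hg : g ∉ Subgroup.center G)
    (hab : ∀ x ∈ Subgroup.centralizer {g}, ∀ y ∈ Subgroup.centralizer {g}, Commute x y)
    (S : Set {x : G // x ∉ Subgroup.center G}) (hgS : ⟨g, hg⟩ ∈ S) :
    ¬ (commGraph G).IsForbidden S := by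
  rintro ⟨n, -, hn5, hiso⟩
  obtain ⟨m, rfl⟩ : ∃ m, n = m + 5 := ⟨n - 5, by omega⟩
  have hne : ∀ a b : ℕ, a < m+5 → b < m+5 → a ≠ b →
      ((a : ℕ) : Fin (m+5)) ≠ ((b : ℕ) : Fin (m+5)) := by
    intro a b ha hb hab h
    apply hab
    have := congrArg Fin.val h
    rwa [Fin.val_cast_of_lt ha, Fin.val_cast_of_lt hb] at this
  have h21 : (2 : Fin (m+5)) ≠ 1 := by simpa using hne 2 1 (by omega) (by omega) (by omega)
  have h31 : (3 : Fin (m+5)) ≠ 1 := by simpa using hne 3 1 (by omega) (by omega) (by omega)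
  have h20 : (2 : Fin (m+5)) ≠ 0 := by simpa using hne 2 0 (by omega) (by omega) (by omega)
  have h30 : (3 : Fin (m+5)) ≠ 0 := by simpa using hne 3 0 (by omega) (by omega) (by omega)
  have h40 : (4 : Fin (m+5)) ≠ 0 := by simpa using hne 4 0 (by omega) (by omega) (by omega)
  have hcyc : ∀ u w : Fin (m+5), (cycleGraph (m+5)).Adj u w ↔ u - w = 1 ∨ w - u = 1 :=
    fun u w => cycleGraph_adj
  set Γ := (commGraph G).induce S with hΓ
  set v0 : ↥S := ⟨⟨g, hg⟩, hgS⟩ with hv0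
  -- the neighbourhood of v0 is a clique
  have key : ∀ x y : ↥S, Γ.Adj v0 x → Γ.Adj v0 y → x ≠ y → Γ.Adj x y := by
    intro x y hx hy hxy
    have hxc : ((x : {a : G // a ∉ Subgroup.center G}) : G) ∈ Subgroup.centralizer {g} := by
      rw [Subgroup.mem_centralizer_iff]
      intro z hz
      rcases Set.mem_singleton_iff.mp hz with rfl
      exact hx.2
    have hyc : ((y : {a : G // a ∉ Subgroup.center G}) : G) ∈ Subgroup.centralizer {g} := by
      rw [Subgroup.mem_centralizer_iff]
      intro z hz
      rcases Set.mem_singleton_iff.mp hz with rfl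
      exact hy.2
    exact ⟨fun h => hxy (Subtype.ext h), hab _ hxc _ hyc⟩
  rcases hiso with he | he <;> obtain ⟨e⟩ := he
  · -- cycle case
    set v : Fin (m+5) := e v0 with hv
    have h1 : Γ.Adj v0 (e.symm (v + 1)) := by
      rw [← e.map_adj_iff, e.apply_symm_apply, ← hv, hcyc]
      right; exact add_sub_cancel_left v 1
    have h2 : Γ.Adj v0 (e.symm (v - 1)) := by
      rw [← e.map_adj_iff, e.apply_symm_apply, ← hv, hcyc]
      left; exact sub_sub_cancel v 1
    have hne' : e.symm (v + 1) ≠ e.symm (v - 1) := by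
      intro h
      have : v + 1 = v - 1 := e.symm.injective h
      have : (2 : Fin (m+5)) = 0 := by linear_combination this
      exact h20 this
    have := key _ _ h1 h2 hne'
    rw [← e.map_adj_iff] at this
    rw [e.apply_symm_apply, e.apply_symm_apply, hcyc] at this
    rcases this with h | h
    · exact h21 (by linear_combination h)
    · exact h30 (by linear_combination -h)
  · -- complement case
    set v : Fin (m+5) := e v0 with hv
    have h1 : Γ.Adj v0 (e.symm (v + 2)) := by
      rw [← e.map_adj_iff, e.apply_symm_apply, ← hv]
      refine ⟨fun h => h20 (by linear_combination -h), ?_⟩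
      rw [hcyc]
      rintro (h | h)
      · exact h30 (by linear_combination -h)
      · exact h21 (by linear_combination h)
    have h2 : Γ.Adj v0 (e.symm (v + 3)) := by
      rw [← e.map_adj_iff, e.apply_symm_apply, ← hv]
      refine ⟨fun h => h30 (by linear_combination -h), ?_⟩
      rw [hcyc]
      rintro (h | h)
      · exact h40 (by linear_combination -h)
      · exact h31 (by linear_combination h)
    have hne' : e.symm (v + 2) ≠ e.symm (v + 3) := by
      intro h
      have := e.symm.injective h
      exact (by simpa using hne 1 0 (by omega) (by omega) (by omega) : (1 : Fin (m+5)) ≠ 0)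
        (by linear_combination -this)
    have := key _ _ h1 h2 hne'
    rw [← e.map_adj_iff, e.apply_symm_apply, e.apply_symm_apply] at this
    exact this.2 ((hcyc _ _).mpr (Or.inr (by ring)))
end

section
/- Let G be a finite group such that the centralizer of every non-central element of G is abelian (i.e., G is an AC-group). Then the commuting graph Γ(G) is perfect. -/
open SimpleGraph

theorem isPerfect_of_AC_group
    (G : Type*) [Group G] [Finite G]
    (hAC : ∀ g : G, g ∉ Subgroup.center G →
      ∀ x ∈ Subgroup.centralizer {g}, ∀ y ∈ Subgroup.centralizer {g}, Commute x y) :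
    (commGraph G).IsPerfectGraph := by
  classical
  intro s
  letI : Fintype G := Fintype.ofFinite G
  letI : Fintype ↥s := Fintype.ofFinite _
  set H := (commGraph G).induce s with hHdef
  -- transitivity of commuting among non-central elements
  have key : ∀ x y z : {g : G // g ∉ Subgroup.center G}, Commute (x : G) (y : G) → Commute (y : G) (z : G) →
      Commute (x : G) (z : G) := by
    intro x y z hxy hyz
    refine hAC (y : G) y.2 (x : G) ?_ (z : G) ?_
    · rw [Subgroup.mem_centralizer_iff]
      intro h hh
      rw [Set.mem_singleton_iff] at hh
      subst hh
      exact hxy.symm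
    · rw [Subgroup.mem_centralizer_iff]
      intro h hh
      rw [Set.mem_singleton_iff] at hh
      subst hh
      exact hyz
  -- an injection into ℕ
  let f : ↥s → ℕ := fun v => (Fintype.equivFin ↥s v : ℕ)
  have hf : Function.Injective f := fun a b h => by
    simpa [f] using (Fintype.equivFin ↥s).injective (Fin.val_injective h)
  -- the coloring: rank within its commuting class
  let Fv : ↥s → Finset ↥s := fun v =>
    Finset.univ.filter (fun u => Commute ((u : {g : G // g ∉ Subgroup.center G}) : G) ((v : {g : G // g ∉ Subgroup.center G}) : G) ∧ f u < f v)
  let C : ↥s → ℕ := fun v => (Fv v).card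
  have hadj : ∀ v w : ↥s, H.Adj v w ↔ ((v : {g : G // g ∉ Subgroup.center G}) ≠ (w : {g : G // g ∉ Subgroup.center G}) ∧
      Commute (((v : {g : G // g ∉ Subgroup.center G})) : G) (((w : {g : G // g ∉ Subgroup.center G})) : G)) := fun v w => Iff.rfl
  -- monotone step
  have step : ∀ v w : ↥s, H.Adj v w → f w < f v → C w < C v := by
    intro v w hvw hlt
    obtain ⟨hne, hcomm⟩ := (hadj v w).mp hvw
    apply Finset.card_lt_card
    constructor
    · intro u hu
      simp only [Fv, Finset.mem_filter, Finset.mem_univ, true_and] at hu ⊢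
      exact ⟨key _ _ _ hu.1 hcomm.symm, hu.2.trans hlt⟩
    · intro hsub
      have hw : w ∈ Fv v := by
        simp only [Fv, Finset.mem_filter, Finset.mem_univ, true_and]
        exact ⟨hcomm.symm, hlt⟩
      have := hsub hw
      simp only [Fv, Finset.mem_filter, Finset.mem_univ, true_and] at this
      exact lt_irrefl _ this.2
  -- the coloring is proper
  have proper : ∀ v w : ↥s, H.Adj v w → C v ≠ C w := by
    intro v w hvw
    have hne : v ≠ w := fun h => ((hadj v w).mp hvw).1 (by rw [h])
    rcases lt_trichotomy (f v) (f w) with h | h | h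
    · exact (step w v hvw.symm h).ne
    · exact absurd (hf h) hne
    · exact (step v w hvw h).ne'
  -- each color is bounded by the clique number
  have bdd : ∀ v : ↥s, C v < H.cliqueNum := by
    intro v
    have hvmem : v ∉ Fv v := by
      simp [Fv]
    have hclique : H.IsClique (insert v (Fv v) : Finset ↥s) := by
      intro a ha b hb hab
      simp only [Finset.coe_insert, Set.mem_insert_iff, Finset.mem_coe,
        Finset.mem_filter, Finset.mem_univ, true_and, Fv] at ha hb
      have hca : Commute ((a : {g : G // g ∉ Subgroup.center G}) : G) ((v : {g : G // g ∉ Subgroup.center G}) : G) := by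
        rcases ha with h | h
        · rw [h]
        · exact h.1
      have hcb : Commute ((b : {g : G // g ∉ Subgroup.center G}) : G) ((v : {g : G // g ∉ Subgroup.center G}) : G) := by
        rcases hb with h | h
        · rw [h]
        · exact h.1
      exact (hadj a b).mpr ⟨Subtype.coe_injective.ne hab, key _ _ _ hca hcb.symm⟩
    have hcard : (insert v (Fv v) : Finset ↥s).card = C v + 1 := by
      rw [Finset.card_insert_of_notMem hvmem]
    have := hclique.card_le_cliqueNum
    rw [hcard] at this
    omega
  have hcol : H.Colorable H.cliqueNum := by
    rw [colorable_iff_exists_bdd_nat_coloring]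
    exact ⟨Coloring.mk C (fun {v w} h => proper v w h), bdd⟩
  refine le_antisymm hcol.chromaticNumber_le ?_
  obtain ⟨t, ht⟩ := H.exists_isNClique_cliqueNum
  have := ht.isClique.card_le_chromaticNumber
  rwa [ht.card_eq] at this
end

section
/- Let G be a finite group and let g and h be two distinct vertices of a forbidden subgraph of the commuting graph Γ(G); that is, suppose S ⊆ G∖Z(G) is a set with g, h ∈ S such that the induced subgraph of Γ(G) on S is isomorphic to a cycle of odd length at least 5 or to the complement of such a cycle. Then gh⁻¹ ∉ Z(G). -/
open SimpleGraph
open Fin.CommRing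

lemma finNZ (m k : ℕ) (h1 : 0 < k) (h2 : k < m + 5) : ((k : ℕ) : Fin (m+5)) ≠ 0 := by
  rw [Ne, Fin.natCast_eq_zero]
  intro hd
  exact absurd (Nat.le_of_dvd h1 hd) (by omega)

lemma cycle_no_twins {n : ℕ} (hn : 5 ≤ n) (a b : Fin n) (hab : a ≠ b)
    (htw : ∀ x : Fin n, x ≠ a → x ≠ b →
      ((cycleGraph n).Adj a x ↔ (cycleGraph n).Adj b x)) : False := by
  obtain ⟨m, rfl⟩ : ∃ m, n = m + 5 := ⟨n - 5, by omega⟩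
  have h1 : (1 : Fin (m+5)) ≠ 0 := by simpa using finNZ m 1 (by norm_num) (by omega)
  have h2 : (2 : Fin (m+5)) ≠ 0 := by simpa using finNZ m 2 (by norm_num) (by omega)
  have h3 : (3 : Fin (m+5)) ≠ 0 := by simpa using finNZ m 3 (by norm_num) (by omega)
  have h4 : (4 : Fin (m+5)) ≠ 0 := by simpa using finNZ m 4 (by norm_num) (by omega)
  by_cases hadj : (cycleGraph (m+5)).Adj a b
  · rw [cycleGraph_adj] at hadj
    rcases hadj with e | e
    · -- a - b = 1, i.e. a = 1 + b
      have ha : a = 1 + b := by linear_combination e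
      have hxb : b - 1 ≠ b := fun e2 => h1 (by linear_combination -e2)
      have hxa : b - 1 ≠ a := fun e2 => h2 (by linear_combination -e2 - ha)
      have habx : (cycleGraph (m+5)).Adj b (b - 1) := by
        rw [cycleGraph_adj]; left; ring
      have := (htw (b - 1) hxa hxb).mpr habx
      rw [cycleGraph_adj] at this
      rcases this with e2 | e2
      · exact h1 (by linear_combination e2 - ha)
      · exact h3 (by linear_combination -e2 - ha)
    · -- b - a = 1, i.e. b = 1 + a
      have hb : b = 1 + a := by linear_combination e
      have hxa : a - 1 ≠ a := fun e2 => h1 (by linear_combination -e2)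
      have hxb : a - 1 ≠ b := fun e2 => h2 (by linear_combination -e2 - hb)
      have habx : (cycleGraph (m+5)).Adj a (a - 1) := by
        rw [cycleGraph_adj]; left; ring
      have := (htw (a - 1) hxa hxb).mp habx
      rw [cycleGraph_adj] at this
      rcases this with e2 | e2
      · exact h1 (by linear_combination e2 - hb)
      · exact h3 (by linear_combination -e2 - hb)
  · rw [cycleGraph_adj] at hadj
    push_neg at hadj
    obtain ⟨hab1, hab2⟩ := hadj
    -- x₁ = a + 1
    have hx1a : a + 1 ≠ a := fun e2 => h1 (by linear_combination e2)
    have hx1b : a + 1 ≠ b := fun e2 => hab2 (by linear_combination -e2)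
    have hA1 : (cycleGraph (m+5)).Adj a (a + 1) := by
      rw [cycleGraph_adj]; right; ring
    have hB1 := (htw (a + 1) hx1a hx1b).mp hA1
    rw [cycleGraph_adj] at hB1
    have hb2 : b = a + 2 := by
      rcases hB1 with e2 | e2
      · linear_combination e2
      · exact absurd (show a = b by linear_combination e2) hab
    -- x₂ = a - 1
    have hx2a : a - 1 ≠ a := fun e2 => h1 (by linear_combination -e2)
    have hx2b : a - 1 ≠ b := fun e2 => hab1 (by linear_combination e2)
    have hA2 : (cycleGraph (m+5)).Adj a (a - 1) := by
      rw [cycleGraph_adj]; left; ring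
    have hB2 := (htw (a - 1) hx2a hx2b).mp hA2
    rw [cycleGraph_adj] at hB2
    rcases hB2 with e2 | e2
    · exact h2 (by linear_combination e2 - hb2)
    · exact h4 (by linear_combination -e2 - hb2)

theorem mul_inv_not_mem_center_of_forbidden
    (G : Type*) [Group G] [Finite G]
    (g h : {x : G // x ∉ Subgroup.center G}) (hgh : g ≠ h)
    (S : Set {x : G // x ∉ Subgroup.center G}) (hgS : g ∈ S) (hhS : h ∈ S)
    (hforb : (commGraph G).IsForbidden S) :
    (g : G) * (h : G)⁻¹ ∉ Subgroup.center G := by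
  intro hz
  set g' : ↥S := ⟨g, hgS⟩ with hg'
  set h' : ↥S := ⟨h, hhS⟩ with hh'
  have hg'h' : g' ≠ h' := fun e => hgh (congrArg Subtype.val e)
  have hzc : ∀ x : G, Commute ((g : G) * (h : G)⁻¹) x :=
    fun x => (Subgroup.mem_center_iff.mp hz x).symm
  have key : ∀ x : G, Commute (g : G) x ↔ Commute (h : G) x := by
    intro x
    constructor
    · intro hc
      have h2 := Commute.mul_left ((hzc x).inv_left) hc
      have e : ((g : G) * (h : G)⁻¹)⁻¹ * (g : G) = (h : G) := by group
      rwa [e] at h2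
    · intro hc
      have h2 := Commute.mul_left (hzc x) hc
      have e : ((g : G) * (h : G)⁻¹) * (h : G) = (g : G) := by group
      rwa [e] at h2
  have htwS : ∀ x : ↥S, x ≠ g' → x ≠ h' →
      (((commGraph G).induce S).Adj g' x ↔ ((commGraph G).induce S).Adj h' x) := by
    intro x hxg hxh
    have hgx : (g : {x : G // x ∉ Subgroup.center G}) ≠ (x : _) :=
      fun e => hxg (Subtype.ext e.symm)
    have hhx : (h : {x : G // x ∉ Subgroup.center G}) ≠ (x : _) :=
      fun e => hxh (Subtype.ext e.symm)
    show (commGraph G).Adj g' x ↔ (commGraph G).Adj h' x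
    constructor
    · rintro (⟨-, hc⟩ : _ ∧ _)
      exact ⟨hhx, (key _).mp hc⟩
    · rintro (⟨-, hc⟩ : _ ∧ _)
      exact ⟨hgx, (key _).mpr hc⟩
  obtain ⟨n, -, hn5, hiso | hiso⟩ := hforb
  · obtain ⟨f⟩ := hiso
    refine cycle_no_twins hn5 (f g') (f h')
      (fun e => hg'h' (f.toEquiv.injective e)) ?_
    intro y hya hyb
    have h1 : f.symm y ≠ g' := fun e => hya (by rw [← e, RelIso.apply_symm_apply])
    have h2 : f.symm y ≠ h' := fun e => hyb (by rw [← e, RelIso.apply_symm_apply])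
    have := htwS (f.symm y) h1 h2
    rw [← f.map_adj_iff, ← f.map_adj_iff, RelIso.apply_symm_apply] at this
    exact this
  · obtain ⟨f⟩ := hiso
    refine cycle_no_twins hn5 (f g') (f h')
      (fun e => hg'h' (f.toEquiv.injective e)) ?_
    intro y hya hyb
    have h1 : f.symm y ≠ g' := fun e => hya (by rw [← e, RelIso.apply_symm_apply])
    have h2 : f.symm y ≠ h' := fun e => hyb (by rw [← e, RelIso.apply_symm_apply])
    have h3 := htwS (f.symm y) h1 h2
    rw [← f.map_adj_iff, ← f.map_adj_iff, RelIso.apply_symm_apply] at h3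
    rw [compl_adj, compl_adj] at h3
    constructor
    · intro hA
      by_contra hB
      exact (h3.mpr ⟨(Ne.symm hyb), hB⟩).2 hA
    · intro hB
      by_contra hA
      exact (h3.mp ⟨(Ne.symm hya), hA⟩).2 hB
end

section
/- Let G be a finite group, Z a central subgroup of G, K = G/Z, and φ : G → K the natural projection. Let Ω ⊆ K, and suppose that for each ω ∈ Ω the elements of the fiber φ⁻¹(ω) are pairwise non-conjugate in G. Then the commuting graph on Ω is perfect if and only if the commuting graph on φ⁻¹(Ω) is perfect. -/
open SimpleGraph

section Aux
variable {V : Type*} {W : Type*} {G : SimpleGraph V} {H : SimpleGraph W}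

lemma aux_chromaticNumber_le_of_embedding (f : G ↪g H) :
    G.chromaticNumber ≤ H.chromaticNumber := by
  by_cases h : H.chromaticNumber = ⊤
  · simp [h]
  · have hc := H.colorable_of_chromaticNumber_ne_top h
    have := (SimpleGraph.Colorable.of_hom f.toHom hc).chromaticNumber_le
    rwa [ENat.coe_toNat h] at this

lemma aux_chromaticNumber_eq_of_iso (e : G ≃g H) :
    G.chromaticNumber = H.chromaticNumber :=
  le_antisymm (aux_chromaticNumber_le_of_embedding e.toEmbedding)
    (aux_chromaticNumber_le_of_embedding e.symm.toEmbedding)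

lemma aux_cliqueNum_le_of_embedding [Fintype V] [Fintype W] (f : G ↪g H) :
    G.cliqueNum ≤ H.cliqueNum := by
  obtain ⟨s, hs⟩ := G.exists_isNClique_cliqueNum
  have hclique : H.IsClique (s.map f.toEmbedding) := by
    intro a ha b hb hab
    simp only [Finset.coe_map, Set.mem_image, Finset.mem_coe] at ha hb
    obtain ⟨a', ha', rfl⟩ := ha
    obtain ⟨b', hb', rfl⟩ := hb
    show H.Adj (f a') (f b')
    rw [f.map_adj_iff]
    exact hs.isClique ha' hb' (fun h => hab (by rw [h]))
  calc G.cliqueNum = (s.map f.toEmbedding).card := by rw [Finset.card_map, hs.card_eq]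
    _ ≤ H.cliqueNum := hclique.card_le_cliqueNum

lemma aux_cliqueNum_eq_of_iso [Fintype V] [Fintype W] (e : G ≃g H) :
    G.cliqueNum = H.cliqueNum :=
  le_antisymm (aux_cliqueNum_le_of_embedding e.toEmbedding)
    (aux_cliqueNum_le_of_embedding e.symm.toEmbedding)

lemma aux_cliqueNum_le_chromaticNumber [Fintype V] :
    (G.cliqueNum : ℕ∞) ≤ G.chromaticNumber := by
  obtain ⟨s, hs⟩ := G.exists_isNClique_cliqueNum
  have hcol := G.colorable_of_fintype
  have h2 := G.colorable_chromaticNumber hcol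
  have h3 : s.card ≤ ENat.toNat G.chromaticNumber := hs.isClique.card_le_of_colorable h2
  rw [hs.card_eq] at h3
  have hne : G.chromaticNumber ≠ ⊤ := by
    rw [chromaticNumber_ne_top_iff_exists]; exact ⟨_, hcol⟩
  calc (G.cliqueNum : ℕ∞) ≤ (ENat.toNat G.chromaticNumber : ℕ∞) := by exact_mod_cast h3
    _ = G.chromaticNumber := ENat.coe_toNat hne

/-- Isomorphism between induced subgraphs from a compatible bijection. -/
def auxInduceIso (G : SimpleGraph V) (H : SimpleGraph W) {s : Set V} {t : Set W}
    (e : s ≃ t) (he : ∀ a b : s, G.Adj ↑a ↑b ↔ H.Adj ↑(e a) ↑(e b)) :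
    G.induce s ≃g H.induce t where
  toEquiv := e
  map_rel_iff' := by intro a b; exact (he a b).symm

end Aux

section Replication
variable {W : Type*} [Fintype W] {H : SimpleGraph W}

/-- A clique of `H` contained in `u` gives a lower bound on the clique number of the
induced subgraph. -/
lemma aux_card_le_cliqueNum_induce (H : SimpleGraph W) (u : Set W) (C : Finset W)
    (hC : H.IsClique ↑C) (hsub : ↑C ⊆ u) : C.card ≤ (H.induce u).cliqueNum := by
  classical
  have : Fintype u := Fintype.ofFinite _
  set C' : Finset u := C.subtype (· ∈ u) with hC'
  have hcard : C'.card = C.card := by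
    rw [hC', Finset.card_subtype, Finset.filter_true_of_mem (fun x hx => hsub hx)]
  have hclique : (H.induce u).IsClique ↑C' := by
    intro a ha b hb hab
    simp only [hC', Finset.mem_coe, Finset.mem_subtype] at ha hb
    show H.Adj ↑a ↑b
    exact hC ha hb (fun h => hab (Subtype.ext h))
  rw [← hcard]
  exact hclique.card_le_cliqueNum

/-- Cliques of an induced subgraph embed as cliques of the big graph. -/
lemma aux_cliqueNum_induce_as_clique (H : SimpleGraph W) (u : Set W) :
    ∃ C : Finset W, H.IsClique ↑C ∧ ↑C ⊆ u ∧ C.card = (H.induce u).cliqueNum := by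
  classical
  have : Fintype u := Fintype.ofFinite _
  obtain ⟨D, hD⟩ := (H.induce u).exists_isNClique_cliqueNum
  refine ⟨D.map (Function.Embedding.subtype _), ?_, ?_, ?_⟩
  · intro a ha b hb hab
    simp only [Finset.coe_map, Set.mem_image, Finset.mem_coe,
      Function.Embedding.coe_subtype] at ha hb
    obtain ⟨a', ha', rfl⟩ := ha
    obtain ⟨b', hb', rfl⟩ := hb
    exact hD.isClique ha' hb' (fun h => hab (by rw [h]))
  · intro x hx
    simp only [Finset.coe_map, Set.mem_image, Finset.mem_coe,
      Function.Embedding.coe_subtype] at hx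
    obtain ⟨a', _, rfl⟩ := hx
    exact a'.2
  · rw [Finset.card_map, hD.card_eq]

lemma aux_replication (v v' : W) (hvv : v ≠ v') (hadj : H.Adj v v')
    (htwin : ∀ z, z ≠ v → z ≠ v' → (H.Adj v z ↔ H.Adj v' z))
    (hperf : ∀ u : Set W, v' ∉ u →
      (H.induce u).chromaticNumber = ((H.induce u).cliqueNum : ℕ∞)) :
    H.chromaticNumber = (H.cliqueNum : ℕ∞) := by
  classical
  refine le_antisymm ?_ aux_cliqueNum_le_chromaticNumber
  rw [chromaticNumber_le_iff_colorable]
  have hv : v ∈ ({v'}ᶜ : Set W) := hvv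
  set K := H.induce ({v'}ᶜ : Set W) with hKdef
  have : Fintype ({v'}ᶜ : Set W) := Fintype.ofFinite _
  set k := K.cliqueNum with hkdef
  have hKperf : K.chromaticNumber = (k : ℕ∞) := hperf _ (by simp)
  have hKcol : K.Colorable k := by
    rw [← chromaticNumber_le_iff_colorable, hKperf]
  obtain ⟨c⟩ := hKcol
  -- the embedding of K into H
  have hkle : k ≤ H.cliqueNum := by
    obtain ⟨C, hC1, _, hC3⟩ := aux_cliqueNum_induce_as_clique H ({v'}ᶜ : Set W)
    exact le_of_eq_of_le hC3.symm hC1.card_le_cliqueNum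
  by_cases hcase : ∃ C : Finset ({v'}ᶜ : Set W), K.IsNClique k C ∧ ⟨v, hv⟩ ∈ C
  · -- v is in a maximum clique of K : ω(H) ≥ k+1 and H is (k+1)-colorable
    obtain ⟨C, hC, hvC⟩ := hcase
    set D : Finset W := insert v' (C.map (Function.Embedding.subtype _)) with hDdef
    have hv'notin : v' ∉ C.map (Function.Embedding.subtype _) := by
      simp only [Finset.mem_map, Function.Embedding.coe_subtype]
      rintro ⟨⟨a, ha⟩, -, h⟩
      exact ha h
    have hDclique : H.IsClique ↑D := by
      rw [hDdef, Finset.coe_insert]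
      refine IsClique.insert ?_ ?_
      · intro a ha b hb hab
        simp only [Finset.coe_map, Set.mem_image, Finset.mem_coe,
          Function.Embedding.coe_subtype] at ha hb
        obtain ⟨a', ha', rfl⟩ := ha
        obtain ⟨b', hb', rfl⟩ := hb
        exact hC.isClique ha' hb' (fun h => hab (by rw [h]))
      · intro b hb hbv'
        simp only [Finset.coe_map, Set.mem_image, Finset.mem_coe,
          Function.Embedding.coe_subtype] at hb
        obtain ⟨⟨b', hb'⟩, hbC, rfl⟩ := hb
        rcases eq_or_ne b' v with rfl | hbv
        · exact hadj.symm
        · have : H.Adj v b' := hC.isClique hvC hbC (fun h => hbv (by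
            simpa using (Subtype.ext_iff.mp h).symm))
          exact (htwin b' hbv hb').mp this
    have hDcard : D.card = k + 1 := by
      rw [hDdef, Finset.card_insert_of_notMem hv'notin, Finset.card_map, hC.card_eq]
    have hle : k + 1 ≤ H.cliqueNum := by
      rw [← hDcard]; exact hDclique.card_le_cliqueNum
    have hcol : H.Colorable (k + 1) := by
      refine ⟨Coloring.mk (fun z => if h : z ∈ ({v'}ᶜ : Set W)
        then (c ⟨z, h⟩).castSucc else Fin.last k) ?_⟩
      intro a b hab heq
      by_cases ha : a ∈ ({v'}ᶜ : Set W) <;> by_cases hb : b ∈ ({v'}ᶜ : Set W)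
      · simp only [dif_pos ha, dif_pos hb] at heq
        have : K.Adj ⟨a, ha⟩ ⟨b, hb⟩ := hab
        exact c.valid this (Fin.castSucc_injective _ heq)
      · simp only [dif_pos ha, dif_neg hb] at heq
        exact absurd heq (Fin.castSucc_lt_last _).ne
      · simp only [dif_neg ha, dif_pos hb] at heq
        exact absurd heq.symm (Fin.castSucc_lt_last _).ne
      · simp only [Set.mem_compl_iff, Set.mem_singleton_iff, not_not] at ha hb
        exact hab.ne (ha.trans hb.symm)
    exact hcol.mono hle
  · -- v is in no maximum clique of K : H is k-colorable
    push_neg at hcase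
    have hk1 : 1 ≤ k := by
      have : K.IsClique ({⟨v, hv⟩} : Finset ({v'}ᶜ : Set W)) := by simp
      simpa using this.card_le_cliqueNum
    set A : Set W := {z : W | ∃ h : z ∈ ({v'}ᶜ : Set W), z ≠ v ∧ c ⟨z, h⟩ = c ⟨v, hv⟩}
      with hAdef
    set u : Set W := {z : W | z ∈ ({v'}ᶜ : Set W) ∧ z ∉ A} with hudef
    have hv'u : v' ∉ u := fun h => h.1 rfl
    have hvu : v ∈ u := ⟨hv, fun ⟨_, h, _⟩ => h rfl⟩
    set m := (H.induce u).cliqueNum with hmdef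
    have hum : (H.induce u).chromaticNumber = (m : ℕ∞) := hperf u hv'u
    -- every clique of H·u has size ≤ k - 1
    have hmk : m ≤ k - 1 := by
      obtain ⟨C, hC1, hC2, hC3⟩ := aux_cliqueNum_induce_as_clique H u
      have hCsub : ↑C ⊆ ({v'}ᶜ : Set W) := fun x hx => (hC2 hx).1
      have hmlek : m ≤ k :=
        le_of_eq_of_le hC3.symm (aux_card_le_cliqueNum_induce H _ C hC1 hCsub)
      rcases lt_or_eq_of_le hmlek with h | h
      · omega
      · exfalso
        -- C is a k-clique of K, so v ∉ C, and c is a bijection on C, so C meets A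
        set C' : Finset ({v'}ᶜ : Set W) := C.subtype (· ∈ ({v'}ᶜ : Set W)) with hC'def
        have hC'card : C'.card = k := by
          rw [hC'def, Finset.card_subtype,
            Finset.filter_true_of_mem (fun x hx => hCsub hx), hC3, ← h]
        have hC'clique : K.IsClique ↑C' := by
          intro a ha b hb hab
          simp only [hC'def, Finset.mem_coe, Finset.mem_subtype] at ha hb
          show H.Adj ↑a ↑b
          exact hC1 ha hb (fun hh => hab (Subtype.ext hh))
        have hvC' : (⟨v, hv⟩ : ({v'}ᶜ : Set W)) ∉ C' := hcase C' ⟨hC'clique, hC'card⟩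
        -- c is injective on C'
        have hinj : Set.InjOn c ↑C' := by
          intro a ha b hb heq
          by_contra hne
          exact c.valid (hC'clique ha hb hne) heq
        have himg : C'.image c = Finset.univ := by
          apply Finset.eq_univ_of_card
          rw [Finset.card_image_of_injOn hinj, hC'card, Fintype.card_fin]
        have : c ⟨v, hv⟩ ∈ C'.image c := by rw [himg]; exact Finset.mem_univ _
        obtain ⟨z, hzC', hzc⟩ := Finset.mem_image.mp this
        have hzv : (z : W) ≠ v := by
          intro hh
          exact hvC' (by rwa [show (⟨v, hv⟩ : ({v'}ᶜ : Set W)) = z from (Subtype.ext hh).symm])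
        have hzu : (z : W) ∈ u := hC2 (Finset.mem_coe.mpr (Finset.mem_subtype.mp hzC'))
        exact hzu.2 ⟨z.2, hzv, by rwa [Subtype.coe_eta]⟩
    have hcolu : (H.induce u).Colorable (k - 1) := by
      have : (H.induce u).Colorable m := by
        rw [← chromaticNumber_le_iff_colorable, hum]
      exact this.mono hmk
    obtain ⟨c'⟩ := hcolu
    have hcol : H.Colorable k := by
      refine ⟨Coloring.mk (fun z => if h : z ∈ u
        then Fin.castLE (Nat.sub_le k 1) (c' ⟨z, h⟩) else ⟨k - 1, by omega⟩) ?_⟩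
      intro a b hab heq
      by_cases ha : a ∈ u <;> by_cases hb : b ∈ u
      · simp only [dif_pos ha, dif_pos hb] at heq
        have : (H.induce u).Adj ⟨a, ha⟩ ⟨b, hb⟩ := hab
        exact c'.valid this (Fin.castLE_injective _ heq)
      · simp only [dif_pos ha, dif_neg hb] at heq
        have h1 := (c' ⟨a, ha⟩).2
        have h2 := congrArg Fin.val heq
        simp only [Fin.coe_castLE] at h2
        omega
      · simp only [dif_neg ha, dif_pos hb] at heq
        have h1 := (c' ⟨b, hb⟩).2
        have h2 := congrArg Fin.val heq
        simp only [Fin.coe_castLE] at h2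
        omega
      · -- a, b both outside u: each is v' or in A; show they cannot be adjacent
        have key : ∀ x, x ∉ u → x = v' ∨ x ∈ A := by
          intro x hx
          by_cases h1 : x = v'
          · exact Or.inl h1
          · right
            by_contra h2
            exact hx ⟨h1, h2⟩
        have hadjA : ∀ x ∈ A, ¬ H.Adj v x := by
          rintro x ⟨hx1, hx2, hx3⟩ hadjvx
          have : K.Adj ⟨v, hv⟩ ⟨x, hx1⟩ := hadjvx
          exact c.valid this hx3.symm
        rcases key a ha with rfl | hA <;> rcases key b hb with rfl | hB
        · exact hab.ne rfl
        · obtain ⟨hb1, hb2, hb3⟩ := hB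
          exact hadjA b ⟨hb1, hb2, hb3⟩ ((htwin b hb2 hb1).mpr hab)
        · obtain ⟨ha1, ha2, ha3⟩ := hA
          exact hadjA a ⟨ha1, ha2, ha3⟩ ((htwin a ha2 ha1).mpr hab.symm)
        · obtain ⟨ha1, ha2, ha3⟩ := hA
          obtain ⟨hb1, hb2, hb3⟩ := hB
          have hKadj : K.Adj ⟨a, ha1⟩ ⟨b, hb1⟩ := hab
          have hne2 := c.valid hKadj
          rw [ha3, hb3] at hne2
          exact hne2 rfl

    exact hcol.mono hkle

end Replication

section Main
variable {G : Type*} [Group G]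

lemma aux_commute_of_mk_eq (Z : Subgroup G) [Z.Normal] (hZ : Z ≤ Subgroup.center G)
    {g h w : G} (hgh : QuotientGroup.mk' Z g = QuotientGroup.mk' Z h)
    (hgw : Commute g w) : Commute h w := by
  obtain ⟨z, hz, rfl⟩ := (QuotientGroup.mk'_eq_mk' (N := Z)).mp hgh
  exact hgw.mul_left ((Subgroup.mem_center_iff.mp (hZ hz) w).symm)

lemma aux_commute_iff_of_mk_eq (Z : Subgroup G) [Z.Normal] (hZ : Z ≤ Subgroup.center G)
    {g h : G} (hgh : QuotientGroup.mk' Z g = QuotientGroup.mk' Z h) (w : G) :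
    Commute g w ↔ Commute h w :=
  ⟨aux_commute_of_mk_eq Z hZ hgh, aux_commute_of_mk_eq Z hZ hgh.symm⟩

lemma aux_commute_self_fiber (Z : Subgroup G) [Z.Normal] (hZ : Z ≤ Subgroup.center G)
    {g h : G} (hgh : QuotientGroup.mk' Z g = QuotientGroup.mk' Z h) : Commute g h :=
  (aux_commute_of_mk_eq Z hZ hgh (Commute.refl g)).symm

lemma aux_commute_of_commute_mk (Z : Subgroup G) [Z.Normal] (Ω : Set (G ⧸ Z))
    (hfib : ∀ ω ∈ Ω, ∀ g h : G, QuotientGroup.mk' Z g = ω → QuotientGroup.mk' Z h = ω →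
      IsConj g h → g = h)
    {g h : G} (hg : QuotientGroup.mk' Z g ∈ Ω)
    (hc : Commute (QuotientGroup.mk' Z g) (QuotientGroup.mk' Z h)) : Commute g h := by
  have hq : QuotientGroup.mk' Z (h * g * h⁻¹) = QuotientGroup.mk' Z g := by
    rw [map_mul, map_mul, map_inv, ← hc.eq, mul_inv_cancel_right]
  have hconj : IsConj g (h * g * h⁻¹) := isConj_iff.mpr ⟨h, rfl⟩
  have := hfib (QuotientGroup.mk' Z g) hg (h * g * h⁻¹) g hq rfl hconj.symm
  exact (mul_inv_eq_iff_eq_mul.mp this).symm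

end Main

/-- The commuting graph on a subset `Ω` of a group: vertices are the elements of `Ω`,
with distinct vertices joined by an edge whenever they commute. -/
def commGraphOn {G : Type*} [Group G] (Ω : Set G) : SimpleGraph Ω where
  Adj x y := x ≠ y ∧ Commute (x : G) (y : G)
  symm := ⟨fun _ _ h => ⟨h.1.symm, h.2.symm⟩⟩
  loopless := ⟨fun _ h => h.1 rfl⟩

theorem commGraphOn_isPerfect_iff_preimage_isPerfect
    (G : Type*) [Group G] [Finite G] (Z : Subgroup G) [Z.Normal]
    (hZ : Z ≤ Subgroup.center G) (Ω : Set (G ⧸ Z))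
    (hfib : ∀ ω ∈ Ω, ∀ g h : G, QuotientGroup.mk' Z g = ω → QuotientGroup.mk' Z h = ω →
      IsConj g h → g = h) :
    (commGraphOn Ω).IsPerfectGraph ↔
      (commGraphOn ((QuotientGroup.mk' Z : G →* G ⧸ Z) ⁻¹' Ω)).IsPerfectGraph := by
  classical
  set Ω' : Set G := (QuotientGroup.mk' Z : G →* G ⧸ Z) ⁻¹' Ω with hΩ'def
  let f : Ω' → Ω := fun x => ⟨QuotientGroup.mk' Z ↑x, x.2⟩
  constructor
  · -- Ω perfect → preimage perfect
    intro hQ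
    suffices main : ∀ n : ℕ, ∀ s : Set Ω', s.ncard = n →
        ((commGraphOn Ω').induce s).chromaticNumber =
          (((commGraphOn Ω').induce s).cliqueNum : ℕ∞) by
      exact fun s => main s.ncard s rfl
    intro n
    induction n using Nat.strong_induction_on with
    | _ n IH =>
      intro s hs
      haveI : Fintype ↥s := Fintype.ofFinite _
      by_cases hinj : Set.InjOn f s
      · -- f is injective on s : the induced graph is isomorphic to an induced
        -- subgraph of the commuting graph on Ω
        haveI : Fintype ↥(f '' s) := Fintype.ofFinite _
        let e : ↥s ≃ ↥(f '' s) := Equiv.Set.imageOfInjOn f s hinj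
        have he : ∀ a b : ↥s, (commGraphOn Ω').Adj ↑a ↑b ↔
            (commGraphOn Ω).Adj ↑(e a) ↑(e b) := by
          intro a b
          have hea : ((e a : ↥(f '' s)) : ↥Ω) = f ↑a := rfl
          have heb : ((e b : ↥(f '' s)) : ↥Ω) = f ↑b := rfl
          rw [hea, heb]
          constructor
          · rintro ⟨hne, hcomm⟩
            refine ⟨fun hcon => hne (hinj a.2 b.2 ?_), hcomm.map _⟩
            · have := congrArg Subtype.val hcon
              exact Subtype.ext this
          · rintro ⟨hne, hcomm⟩
            refine ⟨fun hcon => hne (by rw [hcon]), ?_⟩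
            exact aux_commute_of_commute_mk Z Ω hfib (a : Ω').2 hcomm
        have iso := auxInduceIso (commGraphOn Ω') (commGraphOn Ω) e he
        rw [aux_chromaticNumber_eq_of_iso iso, aux_cliqueNum_eq_of_iso iso]
        exact hQ (f '' s)
      · -- two elements of s lie in the same fiber : use the replication lemma
        rw [Set.InjOn] at hinj
        push_neg at hinj
        obtain ⟨x, hx, y, hy, hfxy, hxy⟩ := hinj
        have hmkxy : QuotientGroup.mk' Z ↑x = QuotientGroup.mk' Z ↑y :=
          congrArg Subtype.val hfxy
        apply aux_replication (v := (⟨x, hx⟩ : ↥s)) (v' := (⟨y, hy⟩ : ↥s))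
        · exact fun h => hxy (congrArg Subtype.val h)
        · exact ⟨hxy, aux_commute_self_fiber Z hZ hmkxy⟩
        · intro z hz1 hz2
          have hzx : (z : ↥Ω') ≠ x := fun h => hz1 (Subtype.ext h)
          have hzy : (z : ↥Ω') ≠ y := fun h => hz2 (Subtype.ext h)
          constructor
          · rintro ⟨-, hcomm⟩
            exact ⟨fun h => hzy (Subtype.ext (congrArg Subtype.val h.symm)),
              aux_commute_of_mk_eq Z hZ hmkxy hcomm⟩
          · rintro ⟨-, hcomm⟩
            exact ⟨fun h => hzx (Subtype.ext (congrArg Subtype.val h.symm)),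
              aux_commute_of_mk_eq Z hZ hmkxy.symm hcomm⟩
        · intro u hu
          haveI : Fintype ↥u := Fintype.ofFinite _
          haveI : Fintype ↥(Subtype.val '' u : Set ↥Ω') := Fintype.ofFinite _
          let e : ↥u ≃ ↥(Subtype.val '' u : Set ↥Ω') :=
            Equiv.Set.image Subtype.val u Subtype.val_injective
          have he : ∀ a b : ↥u, ((commGraphOn Ω').induce s).Adj ↑a ↑b ↔
              (commGraphOn Ω').Adj ↑(e a) ↑(e b) := fun a b => Iff.rfl
          have iso := auxInduceIso ((commGraphOn Ω').induce s) (commGraphOn Ω') e he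
          rw [aux_chromaticNumber_eq_of_iso iso, aux_cliqueNum_eq_of_iso iso]
          have hsub : (Subtype.val '' u : Set ↥Ω') ⊂ s := by
            constructor
            · rintro _ ⟨a, _, rfl⟩
              exact a.2
            · intro hcon
              have : (y : ↥Ω') ∈ Subtype.val '' u := hcon hy
              obtain ⟨a, ha, haa⟩ := this
              exact hu (by rwa [show a = (⟨y, hy⟩ : ↥s) from Subtype.ext haa] at ha)
          have hlt : (Subtype.val '' u : Set ↥Ω').ncard < n := by
            rw [← hs]
            exact Set.ncard_lt_ncard hsub (Set.toFinite s)
          exact IH _ hlt _ rfl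
  · -- preimage perfect → Ω perfect
    intro hP t
    have hsurj := QuotientGroup.mk'_surjective Z
    let σ : ↥Ω → ↥Ω' := fun w =>
      ⟨(hsurj ↑w).choose, by
        show QuotientGroup.mk' Z _ ∈ Ω
        rw [(hsurj ↑w).choose_spec]
        exact w.2⟩
    have hσ : ∀ w : ↥Ω, QuotientGroup.mk' Z ↑(σ w) = ↑w := fun w => (hsurj ↑w).choose_spec
    have hσinj : Function.Injective σ := by
      intro a b h
      apply Subtype.ext
      rw [← hσ a, ← hσ b, h]
    haveI : Fintype ↥t := Fintype.ofFinite _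
    haveI : Fintype ↥(σ '' t) := Fintype.ofFinite _
    let e : ↥t ≃ ↥(σ '' t) := Equiv.Set.imageOfInjOn σ t hσinj.injOn
    have he : ∀ a b : ↥t, (commGraphOn Ω).Adj ↑a ↑b ↔
        (commGraphOn Ω').Adj ↑(e a) ↑(e b) := by
      intro a b
      have hea : ((e a : ↥(σ '' t)) : ↥Ω') = σ ↑a := rfl
      have heb : ((e b : ↥(σ '' t)) : ↥Ω') = σ ↑b := rfl
      rw [hea, heb]
      constructor
      · rintro ⟨hne, hcomm⟩
        refine ⟨fun h => hne (hσinj h), ?_⟩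
        apply aux_commute_of_commute_mk Z Ω hfib (σ (a : ↥Ω)).2
        rw [hσ, hσ]
        exact hcomm
      · rintro ⟨hne, hcomm⟩
        refine ⟨fun h => hne (by rw [h]), ?_⟩
        have := hcomm.map (QuotientGroup.mk' Z)
        rwa [hσ, hσ] at this
    have iso := auxInduceIso (commGraphOn Ω) (commGraphOn Ω') e he
    rw [aux_chromaticNumber_eq_of_iso iso, aux_cliqueNum_eq_of_iso iso]
    exact hP (σ '' t)
end

section
/- Let n be a natural number and let Sym_n be the symmetric group on n letters. Then the commuting graph Γ(Sym_n) is perfect if and only if n ≤ 4. -/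
open SimpleGraph

/-! ### Auxiliary material: greedy colorings along a simplicial-type order -/

instance {G : Type*} [Group G] [DecidableEq G] : DecidableRel (commGraph G).Adj :=
  fun x y => inferInstanceAs (Decidable (x ≠ y ∧ (x : G) * y = y * x))

/-- Greedy coloring of a finite graph along the order given by `F`. -/
noncomputable def greedyC {V : Type*} [Fintype V] (G : SimpleGraph V) (F : V → ℕ) (v : V) : ℕ :=
  sInf {k : ℕ | ∀ u, G.Adj u v → F u < F v → greedyC G F u ≠ k}
termination_by F v
decreasing_by assumption

section Greedy
variable {V : Type*} [Fintype V] (G : SimpleGraph V) (F : V → ℕ)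

lemma greedyC_mem (v : V) :
    greedyC G F v ∈ {k : ℕ | ∀ u, G.Adj u v → F u < F v → greedyC G F u ≠ k} := by
  classical
  have hs : {k : ℕ | ∀ u, G.Adj u v → F u < F v → greedyC G F u ≠ k}.Nonempty := by
    obtain ⟨k, hk⟩ := Infinite.exists_notMem_finset
      ((Finset.univ.filter (fun u => G.Adj u v ∧ F u < F v)).image (greedyC G F))
    refine ⟨k, fun u hadj hlt he => hk ?_⟩
    exact Finset.mem_image.mpr ⟨u, Finset.mem_filter.mpr ⟨Finset.mem_univ _, hadj, hlt⟩, he⟩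
  rw [greedyC]
  exact Nat.sInf_mem hs

lemma greedyC_ne {u v : V} (hadj : G.Adj u v) (hlt : F u < F v) :
    greedyC G F u ≠ greedyC G F v :=
  greedyC_mem G F v u hadj hlt

lemma greedyC_le (v : V) [DecidableRel G.Adj] :
    greedyC G F v ≤ (Finset.univ.filter (fun u => G.Adj u v ∧ F u < F v)).card := by
  classical
  set T : Finset ℕ :=
    ((Finset.univ.filter (fun u => G.Adj u v ∧ F u < F v)).image (greedyC G F)) with hT
  have hcard : T.card ≤ (Finset.univ.filter (fun u => G.Adj u v ∧ F u < F v)).card :=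
    Finset.card_image_le
  have hex : ∃ k ≤ T.card, k ∉ T := by
    by_contra hc
    push_neg at hc
    have hsub : Finset.range (T.card + 1) ⊆ T := by
      intro k hk
      exact hc k (Nat.lt_succ_iff.mp (Finset.mem_range.mp hk))
    have := Finset.card_le_card hsub
    rw [Finset.card_range] at this
    omega
  obtain ⟨k, hk1, hk2⟩ := hex
  have hkmem : k ∈ {k : ℕ | ∀ u, G.Adj u v → F u < F v → greedyC G F u ≠ k} := by
    intro u hadj hlt he
    exact hk2 (Finset.mem_image.mpr ⟨u, Finset.mem_filter.mpr ⟨Finset.mem_univ _, hadj, hlt⟩, he⟩)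
  calc greedyC G F v ≤ k := by rw [greedyC]; exact Nat.sInf_le hkmem
    _ ≤ _ := le_trans hk1 hcard

lemma greedy_colorable
    (hne : ∀ ⦃u v⦄, G.Adj u v → F u ≠ F v)
    (h : ∀ v u w : V, (G.Adj u v ∧ F u < F v ∨ u = v) → (G.Adj w v ∧ F w < F v ∨ w = v) →
      u ≠ w → G.Adj u w) :
    G.Colorable G.cliqueNum := by
  classical
  rw [colorable_iff_exists_bdd_nat_coloring]
  refine ⟨Coloring.mk (greedyC G F) ?_, fun v => ?_⟩
  · intro u v hadj
    rcases lt_or_gt_of_ne (hne hadj) with hlt | hlt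
    · exact greedyC_ne G F hadj hlt
    · exact (greedyC_ne G F hadj.symm hlt).symm
  · have hb := greedyC_le G F v
    set E := Finset.univ.filter (fun u => G.Adj u v ∧ F u < F v) with hE
    have hvE : v ∉ E := by
      simp only [hE, Finset.mem_filter]
      rintro ⟨-, hadj, -⟩
      exact G.loopless.irrefl v hadj
    have hclique : G.IsClique ↑(insert v E) := by
      intro a ha b hb' hab
      simp only [Finset.coe_insert, Set.mem_insert_iff, Finset.mem_coe, hE,
        Finset.mem_filter, Finset.mem_univ, true_and] at ha hb'
      exact h v a b ha.symm hb'.symm hab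
    have hcard : (insert v E).card ≤ G.cliqueNum :=
      (IsClique.card_le_cliqueNum (tc := hclique))
    rw [Finset.card_insert_of_notMem hvE] at hcard
    show greedyC G F v < G.cliqueNum
    omega

end Greedy

/-- If a finite graph has an ordering function `f` such that for every vertex `v` the
set of neighbours `u` of `v` with `f u ≤ f v`, together with `v`, is a clique, then the
graph is perfect. -/
lemma perfect_of_goodOrder {V : Type*} [Fintype V] (G : SimpleGraph V) (f : V → ℕ)
    (h : ∀ v u w : V, (G.Adj u v ∧ f u ≤ f v ∨ u = v) → (G.Adj w v ∧ f w ≤ f v ∨ w = v) →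
      u ≠ w → G.Adj u w) :
    G.IsPerfectGraph := by
  classical
  intro s
  haveI : Fintype ↥s := s.toFinite.fintype
  set N := Fintype.card V with hN
  have hNpos : ∀ (_ : V), 0 < N := fun x => Fintype.card_pos_iff.mpr ⟨x⟩
  set e : V ≃ Fin N := Fintype.equivFin V with he
  set F : ↥s → ℕ := fun u => N * f u.1 + (e u.1 : ℕ) with hF
  have hmono : ∀ u v : ↥s, F u < F v → f u.1 ≤ f v.1 := by
    intro u v hlt
    by_contra hgt
    push_neg at hgt
    have hFu : F u = N * f u.1 + (e u.1 : ℕ) := rfl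
    have hFv : F v = N * f v.1 + (e v.1 : ℕ) := rfl
    have h1 : (e v.1 : ℕ) < N := (e v.1).isLt
    have key : N * (f v.1 + 1) ≤ N * f u.1 := Nat.mul_le_mul_left _ (by omega)
    have hx : N * (f v.1 + 1) = N * f v.1 + N := by ring
    omega
  have hne : ∀ ⦃u v : ↥s⦄, (G.induce s).Adj u v → F u ≠ F v := by
    intro u v hadj hFe
    have hvne : u.1 ≠ v.1 := G.ne_of_adj hadj
    have h1 : (e u.1 : ℕ) < N := (e u.1).isLt
    have h2 : (e v.1 : ℕ) < N := (e v.1).isLt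
    have hd : ∀ w : ↥s, F w / N = f w.1 := fun w => by
      simp [hF, Nat.mul_add_div (hNpos w.1), Nat.div_eq_of_lt (e w.1).isLt]
    have hfeq : f u.1 = f v.1 := by rw [← hd u, ← hd v, hFe]
    have hFu : F u = N * f u.1 + (e u.1 : ℕ) := rfl
    have hFv : F v = N * f v.1 + (e v.1 : ℕ) := rfl
    have hAB : N * f u.1 = N * f v.1 := by rw [hfeq]
    have : (e u.1 : ℕ) = (e v.1 : ℕ) := by omega
    exact hvne (e.injective (Fin.ext this))
  have hcl : ∀ v u w : ↥s, ((G.induce s).Adj u v ∧ F u < F v ∨ u = v) →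
      ((G.induce s).Adj w v ∧ F w < F v ∨ w = v) → u ≠ w → (G.induce s).Adj u w := by
    intro v u w h1 h2 huw
    have tr : ∀ x : ↥s, ((G.induce s).Adj x v ∧ F x < F v ∨ x = v) →
        (G.Adj x.1 v.1 ∧ f x.1 ≤ f v.1 ∨ x.1 = v.1) := by
      rintro x (⟨hadj, hlt⟩ | rfl)
      · exact Or.inl ⟨hadj, hmono x v hlt⟩
      · exact Or.inr rfl
    exact h v.1 u.1 w.1 (tr u h1) (tr w h2) (fun hc => huw (Subtype.ext hc))
  have hcol : (G.induce s).Colorable (G.induce s).cliqueNum :=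
    greedy_colorable (G.induce s) F hne hcl
  refine le_antisymm hcol.chromaticNumber_le ?_
  obtain ⟨t, htc⟩ := (G.induce s).exists_isNClique_cliqueNum
  have := htc.isClique.card_le_chromaticNumber
  rwa [htc.card_eq] at this

/-! ### Auxiliary material: commuting and non-commuting transpositions -/

lemma commute_swap_swap {α : Type*} [DecidableEq α] {a b c d : α}
    (hac : a ≠ c) (had : a ≠ d) (hbc : b ≠ c) (hbd : b ≠ d) :
    Commute (Equiv.swap a b) (Equiv.swap c d) := by
  apply Equiv.ext
  intro x
  simp only [Equiv.Perm.mul_apply, Equiv.swap_apply_def]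
  split_ifs <;> simp_all

lemma not_commute_swap {α : Type*} [DecidableEq α] {a b c : α}
    (hab : a ≠ b) (hac : a ≠ c) (hbc : b ≠ c) :
    ¬ Commute (Equiv.swap a b) (Equiv.swap a c) := by
  intro h
  have := congrArg (fun σ : Equiv.Perm α => σ a) h
  simp only [Equiv.Perm.mul_apply, Equiv.swap_apply_left,
    Equiv.swap_apply_of_ne_of_ne hac.symm hbc.symm,
    Equiv.swap_apply_of_ne_of_ne hab.symm hbc] at this
  exact hbc this.symm

lemma swap_ne_swap {α : Type*} [DecidableEq α] {a b c d : α}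
    (hab : a ≠ b) (hac : a ≠ c) (had : a ≠ d) :
    Equiv.swap a b ≠ Equiv.swap c d := by
  intro h
  have := congrArg (fun σ : Equiv.Perm α => σ a) h
  simp only [Equiv.swap_apply_left, Equiv.swap_apply_of_ne_of_ne hac had] at this
  exact hab this.symm

/-! ### A five-cycle of non-central elements makes the commuting graph imperfect -/

lemma not_perfect_of_cycle {G : Type*} [Group G] (p : Fin 5 → G)
    (hc : ∀ i, p i ∉ Subgroup.center G)
    (hpne : ∀ i, p i ≠ p (i + 1))
    (hcom : ∀ i, Commute (p i) (p (i + 1)))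
    (hncom : ∀ i, ¬ Commute (p i) (p (i + 2))) :
    ¬ (commGraph G).IsPerfectGraph := by
  classical
  intro hperf
  set V := {g : G // g ∉ Subgroup.center G} with hV
  set w' : Fin 5 → V := fun i => ⟨p i, hc i⟩ with hw'
  set s : Set V := Set.range w' with hs
  haveI : Fintype ↥s := (Set.finite_range w').fintype
  set w : Fin 5 → ↥s := fun i => ⟨w' i, Set.mem_range_self i⟩ with hw
  have key : ∀ x : ↥s, ∃ i, x = w i := by
    rintro ⟨x, i, hi⟩
    exact ⟨i, Subtype.ext hi.symm⟩
  have hadj : ∀ i, ((commGraph G).induce s).Adj (w i) (w (i + 1)) := by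
    intro i
    exact comap_adj.mpr ⟨fun h => hpne i (congrArg Subtype.val h), hcom i⟩
  -- the induced subgraph is not 2-colorable
  have hcol : ¬ ((commGraph G).induce s).Colorable 2 := by
    rintro ⟨C⟩
    have hg : ∀ i : Fin 5, C (w i) ≠ C (w (i + 1)) := fun i => C.valid (hadj i)
    have hall : ∀ g : Fin 5 → Fin 2, ∃ i, g i = g (i + 1) := by decide
    obtain ⟨i, hi⟩ := hall (fun i => C (w i))
    exact hg i hi
  -- the clique number of the induced subgraph is 2
  have hclique2 : ((commGraph G).induce s).cliqueNum = 2 := by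
    refine le_antisymm ?_ ?_
    · unfold SimpleGraph.cliqueNum
      refine csSup_le ⟨0, ∅, isNClique_empty.mpr rfl⟩ ?_
      rintro k ⟨t, ht⟩
      by_contra hk
      push_neg at hk
      have h3 : 2 < t.card := ht.card_eq ▸ hk
      obtain ⟨x, y, z, hx, hy, hz, hxy, hxz, hyz⟩ := Finset.two_lt_card_iff.mp h3
      obtain ⟨i, rfl⟩ := key x
      obtain ⟨j, rfl⟩ := key y
      obtain ⟨k', rfl⟩ := key z
      have cij : Commute (p i) (p j) := (comap_adj.mp (ht.isClique hx hy hxy)).2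
      have cik : Commute (p i) (p k') := (comap_adj.mp (ht.isClique hx hz hxz)).2
      have cjk : Commute (p j) (p k') := (comap_adj.mp (ht.isClique hy hz hyz)).2
      have hij : i ≠ j := fun h => hxy (by rw [h])
      have hik : i ≠ k' := fun h => hxz (by rw [h])
      have hjk : j ≠ k' := fun h => hyz (by rw [h])
      have hdist : ∀ i j k : Fin 5, i ≠ j → i ≠ k → j ≠ k →
          j = i + 2 ∨ i = j + 2 ∨ k = i + 2 ∨ i = k + 2 ∨ k = j + 2 ∨ j = k + 2 := by decide
      rcases hdist i j k' hij hik hjk with h|h|h|h|h|h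
      · exact hncom i (h ▸ cij)
      · exact hncom j (h ▸ cij.symm)
      · exact hncom i (h ▸ cik)
      · exact hncom k' (h ▸ cik.symm)
      · exact hncom j (h ▸ cjk)
      · exact hncom k' (h ▸ cjk.symm)
    · have h2 : ({w 0, w 1} : Finset ↥s).card = 2 := by
        rw [Finset.card_insert_of_notMem (by
          simp only [Finset.mem_singleton]
          exact fun h => hpne 0 (congrArg (fun x : ↥s => x.1.1) h)), Finset.card_singleton]
      have hcl : ((commGraph G).induce s).IsClique ({w 0, w 1} : Finset ↥s) := by
        intro a ha b hb hab
        simp only [Finset.coe_insert, Set.mem_insert_iff, Finset.coe_singleton,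
          Set.mem_singleton_iff] at ha hb
        rcases ha with rfl | rfl <;> rcases hb with rfl | rfl
        · exact absurd rfl hab
        · exact hadj 0
        · exact (hadj 0).symm
        · exact absurd rfl hab
      calc 2 = ({w 0, w 1} : Finset ↥s).card := h2.symm
        _ ≤ _ := IsClique.card_le_cliqueNum (tc := hcl)
  have := hperf s
  rw [hclique2] at this
  exact hcol (chromaticNumber_le_iff_colorable.mp (le_of_eq (by exact_mod_cast this)))

/-! ### The `n = 4` ordering function -/

def dt1 : Equiv.Perm (Fin 4) := Equiv.swap 0 1 * Equiv.swap 2 3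
def dt2 : Equiv.Perm (Fin 4) := Equiv.swap 0 2 * Equiv.swap 1 3
def dt3 : Equiv.Perm (Fin 4) := Equiv.swap 0 3 * Equiv.swap 1 2

def f4 : {g : Equiv.Perm (Fin 4) // g ∉ Subgroup.center _} → ℕ :=
  fun v => if v.1 = dt1 ∨ v.1 = dt2 ∨ v.1 = dt3 then 0 else 1

set_option synthInstance.maxSize 1000 in
set_option maxHeartbeats 4000000 in
theorem symmetricGroup_commGraph_isPerfect_iff (n : ℕ) :
    (commGraph (Equiv.Perm (Fin n))).IsPerfectGraph ↔ n ≤ 4 := by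
  constructor
  · intro hperf
    by_contra hn4
    push_neg at hn4
    have h5 : 5 ≤ n := hn4
    set X : Fin 5 → Fin n := fun i => ⟨i.val, by omega⟩ with hX'
    have hX : ∀ i j : Fin 5, i ≠ j → X i ≠ X j := by
      intro i j hij h
      exact hij (Fin.ext (by simpa [hX'] using congrArg Fin.val h))
    set p : Fin 5 → Equiv.Perm (Fin n) :=
      ![Equiv.swap (X 0) (X 1), Equiv.swap (X 2) (X 3), Equiv.swap (X 0) (X 4),
        Equiv.swap (X 1) (X 2), Equiv.swap (X 3) (X 4)] with hp
    have hncom : ∀ i, ¬ Commute (p i) (p (i + 2)) := by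
      intro i
      fin_cases i <;> simp only [hp, Fin.isValue, Matrix.cons_val_zero, Matrix.cons_val_one,
        Matrix.head_cons, Matrix.cons_val_two, Matrix.tail_cons, Matrix.cons_val_three,
        Matrix.cons_val_four, Matrix.cons_val_fin_one]
      · exact not_commute_swap (hX 0 1 (by decide)) (hX 0 4 (by decide)) (hX 1 4 (by decide))
      · rw [Equiv.swap_comm (X 1) (X 2)]
        exact not_commute_swap (hX 2 3 (by decide)) (hX 2 1 (by decide)) (hX 3 1 (by decide))
      · rw [Equiv.swap_comm (X 0) (X 4), Equiv.swap_comm (X 3) (X 4)]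
        exact not_commute_swap (hX 4 0 (by decide)) (hX 4 3 (by decide)) (hX 0 3 (by decide))
      · rw [Equiv.swap_comm (X 0) (X 1)]
        exact not_commute_swap (hX 1 2 (by decide)) (hX 1 0 (by decide)) (hX 2 0 (by decide))
      · rw [Equiv.swap_comm (X 2) (X 3)]
        exact not_commute_swap (hX 3 4 (by decide)) (hX 3 2 (by decide)) (hX 4 2 (by decide))
    have hcom : ∀ i, Commute (p i) (p (i + 1)) := by
      intro i
      fin_cases i <;> simp only [hp, Fin.isValue, Matrix.cons_val_zero, Matrix.cons_val_one,
        Matrix.head_cons, Matrix.cons_val_two, Matrix.tail_cons, Matrix.cons_val_three,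
        Matrix.cons_val_four, Matrix.cons_val_fin_one]
      · exact commute_swap_swap (hX 0 2 (by decide)) (hX 0 3 (by decide))
          (hX 1 2 (by decide)) (hX 1 3 (by decide))
      · exact commute_swap_swap (hX 2 0 (by decide)) (hX 2 4 (by decide))
          (hX 3 0 (by decide)) (hX 3 4 (by decide))
      · exact commute_swap_swap (hX 0 1 (by decide)) (hX 0 2 (by decide))
          (hX 4 1 (by decide)) (hX 4 2 (by decide))
      · exact commute_swap_swap (hX 1 3 (by decide)) (hX 1 4 (by decide))
          (hX 2 3 (by decide)) (hX 2 4 (by decide))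
      · exact commute_swap_swap (hX 3 0 (by decide)) (hX 3 1 (by decide))
          (hX 4 0 (by decide)) (hX 4 1 (by decide))
    have hpne : ∀ i, p i ≠ p (i + 1) := by
      intro i
      fin_cases i <;> simp only [hp, Fin.isValue, Matrix.cons_val_zero, Matrix.cons_val_one,
        Matrix.head_cons, Matrix.cons_val_two, Matrix.tail_cons, Matrix.cons_val_three,
        Matrix.cons_val_four, Matrix.cons_val_fin_one]
      · exact swap_ne_swap (hX 0 1 (by decide)) (hX 0 2 (by decide)) (hX 0 3 (by decide))
      · exact swap_ne_swap (hX 2 3 (by decide)) (hX 2 0 (by decide)) (hX 2 4 (by decide))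
      · exact swap_ne_swap (hX 0 4 (by decide)) (hX 0 1 (by decide)) (hX 0 2 (by decide))
      · exact swap_ne_swap (hX 1 2 (by decide)) (hX 1 3 (by decide)) (hX 1 4 (by decide))
      · exact swap_ne_swap (hX 3 4 (by decide)) (hX 3 0 (by decide)) (hX 3 1 (by decide))
    have hc : ∀ i, p i ∉ Subgroup.center (Equiv.Perm (Fin n)) := fun i h =>
      hncom i (Commute.symm (Subgroup.mem_center_iff.mp h (p (i + 2))))
    exact absurd hperf (not_perfect_of_cycle p hc hpne hcom hncom)
  · intro hn
    interval_cases n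
    · exact perfect_of_goodOrder _ (fun _ => 0) (by decide)
    · exact perfect_of_goodOrder _ (fun _ => 0) (by decide)
    · exact perfect_of_goodOrder _ (fun _ => 0) (by decide)
    · exact perfect_of_goodOrder _ (fun _ => 0) (by decide)
    · exact perfect_of_goodOrder _ f4 (by decide)
end

section
/- Let F be a finite field and let G be any subgroup of the general linear group GL_2(F). Then the commuting graph Γ(G) is perfect. In particular, the commuting graph of SL_2(F) is perfect. -/
open SimpleGraph Finset

lemma cluster_chromaticNumber {V : Type*} [Finite V] (G : SimpleGraph V)
    (h : ∀ ⦃x y z⦄, G.Adj x y → G.Adj y z → x ≠ z → G.Adj x z) :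
    G.chromaticNumber = (G.cliqueNum : ℕ∞) := by
  classical
  cases nonempty_fintype V
  set n := G.cliqueNum with hn
  let e := Fintype.equivFin V
  let S : V → Finset V := fun v => Finset.univ.filter (fun u => G.Adj v u ∧ e u < e v)
  have hSclique : ∀ v, G.IsClique (insert v (S v) : Finset V) := by
    intro v a ha b hb hab
    simp only [Finset.coe_insert, Set.mem_insert_iff, Finset.mem_coe, Finset.mem_filter,
      Finset.mem_univ, true_and, S] at ha hb
    rcases ha with rfl | ⟨ha, _⟩
    · rcases hb with rfl | ⟨hb, _⟩
      · exact absurd rfl hab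
      · exact hb
    · rcases hb with rfl | ⟨hb, _⟩
      · exact ha.symm
      · exact h ha.symm hb hab
  have hcard : ∀ v, (S v).card + 1 ≤ n := by
    intro v
    have hv : v ∉ S v := by simp [S]
    have := (hSclique v).card_le_cliqueNum
    rwa [Finset.card_insert_of_notMem hv] at this
  have hmono : ∀ {v w}, G.Adj v w → e v < e w → (S v).card < (S w).card := by
    intro v w hvw hlt
    have hsub : insert v (S v) ⊆ S w := by
      intro u hu
      simp only [Finset.mem_insert, Finset.mem_filter, Finset.mem_univ, true_and, S] at hu ⊢
      rcases hu with rfl | ⟨hu, hu2⟩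
      · exact ⟨hvw.symm, hlt⟩
      · refine ⟨h hvw.symm hu ?_, hu2.trans hlt⟩
        rintro rfl
        exact absurd (hu2.trans hlt) (lt_irrefl _)
    have := Finset.card_le_card hsub
    have hv : v ∉ S v := by simp [S]
    rw [Finset.card_insert_of_notMem hv] at this
    omega
  have hC : G.Colorable n := by
    refine ⟨Coloring.mk (fun v => ⟨(S v).card, by have := hcard v; omega⟩) ?_⟩
    intro v w hvw
    have hne : e v ≠ e w := fun hh => hvw.ne (e.injective hh)
    rcases hne.lt_or_gt with hl | hl
    · exact fun hh => absurd (congrArg Fin.val hh) (hmono hvw hl).ne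
    · exact fun hh => absurd (congrArg Fin.val hh) (hmono hvw.symm hl).ne'
  refine le_antisymm (hC.chromaticNumber_le) ?_
  obtain ⟨s, hs⟩ := G.exists_isNClique_cliqueNum
  calc (n : ℕ∞) = (s.card : ℕ∞) := by rw [hs.card_eq]
    _ ≤ G.chromaticNumber := hs.isClique.card_le_chromaticNumber


variable {F : Type*} [Field F] in
lemma scalar_mul_comm (M N : Matrix (Fin 2) (Fin 2) F)
    (h1 : M 0 1 = 0) (h2 : M 1 0 = 0) (h3 : M 0 0 = M 1 1) : M * N = N * M := by
  ext i j
  fin_cases i <;> fin_cases j <;>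
    simp [Matrix.mul_apply, Fin.sum_univ_two, h1, h2, h3] <;> ring

variable {F : Type*} [Field F] in
lemma key_comm (A B C : Matrix (Fin 2) (Fin 2) F)
    (hA : ¬(A 0 1 = 0 ∧ A 1 0 = 0 ∧ A 0 0 = A 1 1))
    (hAB : A * B = B * A) (hAC : A * C = C * A) : B * C = C * B := by
  have eB00 := congrFun (congrFun hAB 0) 0
  have eB01 := congrFun (congrFun hAB 0) 1
  have eB10 := congrFun (congrFun hAB 1) 0
  have eC00 := congrFun (congrFun hAC 0) 0
  have eC01 := congrFun (congrFun hAC 0) 1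
  have eC10 := congrFun (congrFun hAC 1) 0
  simp only [Matrix.mul_apply, Fin.sum_univ_two] at eB00 eB01 eB10 eC00 eC01 eC10
  -- eB00 : A00*B00 + A01*B10 = B00*A00 + B01*A10
  push_neg at hA
  by_cases hb : A 0 1 = 0
  · by_cases hc : A 1 0 = 0
    · have hd : A 0 0 ≠ A 1 1 := hA hb hc
      -- then B01 = 0, B10 = 0 etc
      have zero01 : ∀ D : Matrix (Fin 2) (Fin 2) F,
          A 0 0 * D 0 1 + A 0 1 * D 1 1 = D 0 0 * A 0 1 + D 0 1 * A 1 1 → D 0 1 = 0 := by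
        intro D hD
        have : D 0 1 * (A 0 0 - A 1 1) = 0 := by linear_combination hD + (D 0 0 - D 1 1) * hb
        rcases mul_eq_zero.mp this with h | h
        · exact h
        · exact absurd (sub_eq_zero.mp h) hd
      have zero10 : ∀ D : Matrix (Fin 2) (Fin 2) F,
          A 1 0 * D 0 0 + A 1 1 * D 1 0 = D 1 0 * A 0 0 + D 1 1 * A 1 0 → D 1 0 = 0 := by
        intro D hD
        have : D 1 0 * (A 0 0 - A 1 1) = 0 := by linear_combination -hD + (D 0 0 - D 1 1) * hc
        rcases mul_eq_zero.mp this with h | h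
        · exact h
        · exact absurd (sub_eq_zero.mp h) hd
      have hB01 := zero01 B eB01
      have hB10 := zero10 B eB10
      have hC01 := zero01 C eC01
      have hC10 := zero10 C eC10
      ext i j
      fin_cases i <;> fin_cases j <;>
        simp [Matrix.mul_apply, Fin.sum_univ_two, hB01, hB10, hC01, hC10] <;> ring
    · -- A 1 0 ≠ 0
      have hB01 : B 0 1 = A 0 1 * B 1 0 / A 1 0 := by
        field_simp
        linear_combination -eB00
      have hB00 : B 0 0 = (B 1 0 * A 0 0 + B 1 1 * A 1 0 - A 1 1 * B 1 0) / A 1 0 := by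
        field_simp
        linear_combination eB10
      have hC01 : C 0 1 = A 0 1 * C 1 0 / A 1 0 := by
        field_simp
        linear_combination -eC00
      have hC00 : C 0 0 = (C 1 0 * A 0 0 + C 1 1 * A 1 0 - A 1 1 * C 1 0) / A 1 0 := by
        field_simp
        linear_combination eC10
      ext i j
      fin_cases i <;> fin_cases j <;>
        · simp [Matrix.mul_apply, Fin.sum_univ_two, Fin.mk_zero, Fin.mk_one, hB01, hB00, hC01, hC00]
          field_simp
          all_goals ring
  · -- A 0 1 ≠ 0
    have hB10 : B 1 0 = B 0 1 * A 1 0 / A 0 1 := by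
      field_simp
      linear_combination eB00
    have hB00 : B 0 0 = (A 0 0 * B 0 1 + A 0 1 * B 1 1 - B 0 1 * A 1 1) / A 0 1 := by
      field_simp
      linear_combination -eB01
    have hC10 : C 1 0 = C 0 1 * A 1 0 / A 0 1 := by
      field_simp
      linear_combination eC00
    have hC00 : C 0 0 = (A 0 0 * C 0 1 + A 0 1 * C 1 1 - C 0 1 * A 1 1) / A 0 1 := by
      field_simp
      linear_combination -eC01
    ext i j
    fin_cases i <;> fin_cases j <;>
      · simp [Matrix.mul_apply, Fin.sum_univ_two, Fin.mk_zero, Fin.mk_one, hB10, hB00, hC10, hC00]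
        field_simp
        all_goals ring


lemma comm_trans_of_embed {F : Type*} [Field F] {H : Type*} [Group H]
    (f : H →* Matrix (Fin 2) (Fin 2) F) (hf : Function.Injective f) :
    ∀ x y z : H, y ∉ Subgroup.center H → Commute x y → Commute y z → Commute x z := by
  intro x y z hy hxy hyz
  by_cases hs : f y 0 1 = 0 ∧ f y 1 0 = 0 ∧ f y 0 0 = f y 1 1
  · exfalso
    apply hy
    rw [Subgroup.mem_center_iff]
    intro g
    apply hf
    rw [map_mul, map_mul]
    exact (scalar_mul_comm (f y) (f g) hs.1 hs.2.1 hs.2.2).symm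
  · have h1 : f y * f x = f x * f y := by
      rw [← map_mul, ← map_mul, hxy]
    have h2 : f y * f z = f z * f y := by
      rw [← map_mul, ← map_mul, hyz]
    have := key_comm (f y) (f x) (f z) hs h1 h2
    apply hf
    rw [map_mul, map_mul, this]

lemma commGraph_perfect_of_embed {F : Type*} [Field F] {H : Type*} [Group H] [Finite H]
    (f : H →* Matrix (Fin 2) (Fin 2) F) (hf : Function.Injective f) :
    (commGraph H).IsPerfectGraph := by
  intro s
  apply cluster_chromaticNumber
  intro x y z hxy hyz hxz
  have hxy' : (commGraph H).Adj x.1 y.1 := hxy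
  have hyz' : (commGraph H).Adj y.1 z.1 := hyz
  show x.1 ≠ z.1 ∧ Commute (x.1 : H) (z.1 : H)
  refine ⟨?_, comm_trans_of_embed f hf _ _ _ y.1.2 hxy'.2 hyz'.2⟩
  exact fun h => hxz (Subtype.ext h)

theorem subgroup_GL2_commGraph_isPerfect (F : Type*) [Field F] [Fintype F] :
    (∀ G : Subgroup (Matrix.GeneralLinearGroup (Fin 2) F),
      (commGraph G).IsPerfectGraph) ∧
    (commGraph (Matrix.SpecialLinearGroup (Fin 2) F)).IsPerfectGraph := by
  constructor
  · intro G
    exact commGraph_perfect_of_embed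
      ((Units.coeHom (Matrix (Fin 2) (Fin 2) F)).comp G.subtype)
      (Units.val_injective.comp Subtype.coe_injective)
  · exact commGraph_perfect_of_embed
      { toFun := fun g => (g : Matrix (Fin 2) (Fin 2) F),
        map_one' := Matrix.SpecialLinearGroup.coe_one,
        map_mul' := fun a b => Matrix.SpecialLinearGroup.coe_mul a b }
      Subtype.coe_injective
end

section
/- Let F be a finite field of odd cardinality q with q ≥ 5, and let PGL_2(q) denote the quotient of GL_2(F) by its center. Then the commuting graph Γ(PGL_2(q)) is not perfect. -/
open SimpleGraph

open Matrix

namespace PGL2Aux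

variable {F : Type*} [Field F]

lemma half_cancel (h2 : (2:F) ≠ 0) {x : F} (h : (2:F) * x = 0) : x = 0 :=
  (mul_eq_zero.mp h).resolve_left h2

lemma central_scalar (h2 : (2:F) ≠ 0) (Z : GL (Fin 2) F)
    (hZ : Z ∈ Subgroup.center (GL (Fin 2) F)) :
    ∃ a : F, (Z : Matrix (Fin 2) (Fin 2) F) = a • (1 : Matrix (Fin 2) (Fin 2) F) := by
  have hdet1 : (!![(1:F),0;0,-1]).det ≠ 0 := by simp [Matrix.det_fin_two_of]
  have hdet2 : (!![(0:F),1;1,0]).det ≠ 0 := by simp [Matrix.det_fin_two_of]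
  set g1 : GL (Fin 2) F := Matrix.GeneralLinearGroup.mkOfDetNeZero _ hdet1 with hg1
  set g2 : GL (Fin 2) F := Matrix.GeneralLinearGroup.mkOfDetNeZero _ hdet2 with hg2
  have e1 : !![(1:F),0;0,-1] * (Z : Matrix (Fin 2) (Fin 2) F)
      = (Z : Matrix (Fin 2) (Fin 2) F) * !![(1:F),0;0,-1] := by
    have h := congrArg Units.val (Subgroup.mem_center_iff.mp hZ g1)
    rw [Units.val_mul, Units.val_mul] at h
    exact h
  have e2 : !![(0:F),1;1,0] * (Z : Matrix (Fin 2) (Fin 2) F)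
      = (Z : Matrix (Fin 2) (Fin 2) F) * !![(0:F),1;1,0] := by
    have h := congrArg Units.val (Subgroup.mem_center_iff.mp hZ g2)
    rw [Units.val_mul, Units.val_mul] at h
    exact h
  set A := (Z : Matrix (Fin 2) (Fin 2) F) with hA
  have h01 : A 0 1 = 0 := by
    have h := congrFun (congrFun e1 0) 1
    simp [Matrix.mul_apply, Fin.sum_univ_two] at h
    exact half_cancel h2 (by linear_combination h)
  have h10 : A 1 0 = 0 := by
    have h := congrFun (congrFun e1 1) 0
    simp [Matrix.mul_apply, Fin.sum_univ_two] at h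
    exact half_cancel h2 (by linear_combination - h)
  have hd : A 0 0 = A 1 1 := by
    have h := congrFun (congrFun e2 0) 1
    simp [Matrix.mul_apply, Fin.sum_univ_two] at h
    exact h.symm
  refine ⟨A 0 0, ?_⟩
  ext i j
  fin_cases i <;> fin_cases j <;>
    simp [Matrix.one_apply, h01, h10, hd.symm]

lemma quot_eq_scalar (h2 : (2:F) ≠ 0) (M N : GL (Fin 2) F)
    (h : (QuotientGroup.mk M : GL (Fin 2) F ⧸ Subgroup.center (GL (Fin 2) F))
        = QuotientGroup.mk N) :
    ∃ a : F, (N : Matrix (Fin 2) (Fin 2) F) = a • (M : Matrix (Fin 2) (Fin 2) F) := by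
  rw [QuotientGroup.eq] at h
  obtain ⟨a, ha⟩ := central_scalar h2 _ h
  refine ⟨a, ?_⟩
  have hN : (N : Matrix (Fin 2) (Fin 2) F)
      = (M : Matrix (Fin 2) (Fin 2) F) * ((M⁻¹ * N : GL (Fin 2) F) : Matrix (Fin 2) (Fin 2) F) := by
    rw [← Units.val_mul, mul_inv_cancel_left]
  rw [hN, ha, Matrix.mul_smul, mul_one]

lemma commute_cases (h2 : (2:F) ≠ 0) (M N : GL (Fin 2) F)
    (h : Commute (QuotientGroup.mk M : GL (Fin 2) F ⧸ Subgroup.center (GL (Fin 2) F))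
      (QuotientGroup.mk N)) :
    (N : Matrix (Fin 2) (Fin 2) F) * M = (M : Matrix (Fin 2) (Fin 2) F) * N ∨
      (N : Matrix (Fin 2) (Fin 2) F) * M = -((M : Matrix (Fin 2) (Fin 2) F) * N) := by
  have hq : (QuotientGroup.mk (M * N) : GL (Fin 2) F ⧸ Subgroup.center (GL (Fin 2) F))
      = QuotientGroup.mk (N * M) := by
    simpa [QuotientGroup.mk_mul] using h.eq
  obtain ⟨a, ha⟩ := quot_eq_scalar h2 (M*N) (N*M) hq
  rw [Units.val_mul, Units.val_mul] at ha
  have hdu : IsUnit ((M : Matrix (Fin 2) (Fin 2) F) * N).det := by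
    rw [← Units.val_mul]; exact (Matrix.isUnit_iff_isUnit_det _).mp ⟨M*N, rfl⟩
  have hdet : ((N : Matrix (Fin 2) (Fin 2) F) * M).det
      = ((M : Matrix (Fin 2) (Fin 2) F) * N).det := by
    rw [Matrix.det_mul, Matrix.det_mul, mul_comm]
  have ha2 : a ^ 2 = 1 := by
    rw [ha, Matrix.det_smul, Fintype.card_fin] at hdet
    have h0 := hdu.ne_zero
    have hz : (a ^ 2 - 1) * ((M : Matrix (Fin 2) (Fin 2) F) * N).det = 0 := by
      linear_combination hdet
    rcases mul_eq_zero.mp hz with h | h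
    · linear_combination h
    · exact absurd h h0
  have : a = 1 ∨ a = -1 := by
    have : (a - 1) * (a + 1) = 0 := by linear_combination ha2
    rcases mul_eq_zero.mp this with h | h
    · exact Or.inl (by linear_combination h)
    · exact Or.inr (by linear_combination h)
  rcases this with rfl | rfl
  · left; simpa using ha
  · right; simpa [neg_smul] using ha

lemma commute_of_anticomm (M N : GL (Fin 2) F)
    (h : (M : Matrix (Fin 2) (Fin 2) F) * N = -((N : Matrix (Fin 2) (Fin 2) F) * M)) :
    Commute (QuotientGroup.mk M : GL (Fin 2) F ⧸ Subgroup.center (GL (Fin 2) F))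
      (QuotientGroup.mk N) := by
  have hMN : M * N = (-1 : GL (Fin 2) F) * (N * M) := by
    refine Units.ext ?_
    rw [Units.val_mul, Units.val_mul, Units.val_neg, Units.val_one, neg_one_mul]
    exact h
  have hc : ((-1 : GL (Fin 2) F) : GL (Fin 2) F ⧸ Subgroup.center (GL (Fin 2) F)) = 1 := by
    rw [QuotientGroup.eq_one_iff]
    refine Subgroup.mem_center_iff.mpr fun g => ?_
    refine Units.ext ?_
    simp [Units.val_mul]
  show _ = _
  rw [← QuotientGroup.mk_mul, ← QuotientGroup.mk_mul, hMN, QuotientGroup.mk_mul, hc, one_mul]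

lemma exists_cd [Fintype F] (h2 : (2:F) ≠ 0) (hq5 : 5 ≤ Fintype.card F) :
    ∃ c d : F, c ≠ 0 ∧ d ≠ 0 ∧ c^2 ≠ 1 ∧ d^2 ≠ 1 ∧ c^2 + d^2 ≠ 1 := by
  classical
  have sq_ne : ∀ x : F, x ≠ 1 → x ≠ -1 → x^2 ≠ 1 := by
    intro x hx1 hxm1 h
    have : (x - 1) * (x + 1) = 0 := by linear_combination h
    rcases mul_eq_zero.mp this with h' | h'
    · exact hx1 (by linear_combination h')
    · exact hxm1 (by linear_combination h')
  by_cases h3 : (3:F) = 0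
  · -- characteristic 3
    have : ∃ c : F, c ∉ ({0, 1, -1} : Finset F) := by
      by_contra hc
      push_neg at hc
      have huniv : (Finset.univ : Finset F) ⊆ {0, 1, -1} := fun x _ => hc x
      have := Finset.card_le_card huniv
      have h3card : ({0, 1, -1} : Finset F).card ≤ 3 := by
        apply le_trans (Finset.card_insert_le _ _)
        simp [Finset.card_insert_le]
        exact Nat.lt_succ_of_le Finset.card_le_two
      rw [Finset.card_univ] at this
      omega
    obtain ⟨c, hc⟩ := this
    simp only [Finset.mem_insert, Finset.mem_singleton, not_or] at hc
    obtain ⟨hc0, hc1, hcm1⟩ := hc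
    refine ⟨c, c + 1, hc0, ?_, sq_ne c hc1 hcm1, ?_, ?_⟩
    · intro h; exact hcm1 (by linear_combination h)
    · apply sq_ne
      · intro h; exact hc0 (by linear_combination h)
      · intro h; exact hc1 (by linear_combination h - h3)
    · intro h
      have hc2 : c * (c + 1) = 0 := by linear_combination -h + (c^2 + c) * h3
      rcases mul_eq_zero.mp hc2 with h' | h'
      · exact hc0 h'
      · exact hcm1 (by linear_combination h')
  · refine ⟨2, 3, h2, h3, ?_, ?_, ?_⟩
    · intro h; exact h3 (by linear_combination h)
    · intro h
      have : (2:F) * (2 * 2) = 0 := by linear_combination h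
      exact h2 (by
        rcases mul_eq_zero.mp this with h' | h'
        · exact h'
        · rcases mul_eq_zero.mp h' with h'' | h'' <;> exact h'')
    · intro h
      have : (2:F) * (2 * 3) = 0 := by linear_combination h
      rcases mul_eq_zero.mp this with h' | h'
      · exact h2 h'
      · rcases mul_eq_zero.mp h' with h'' | h''
        · exact h2 h''
        · exact h3 h''


private def m1 (F : Type*) [Field F] : GL (Fin 2) F :=
  Matrix.GeneralLinearGroup.mkOfDetNeZero !![(1:F),0;0,-1] (by simp [Matrix.det_fin_two_of])

private def m2 (F : Type*) [Field F] : GL (Fin 2) F :=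
  Matrix.GeneralLinearGroup.mkOfDetNeZero !![(0:F),1;1,0] (by simp [Matrix.det_fin_two_of])

private def m3 (c : F) (hc1 : c^2 ≠ 1) : GL (Fin 2) F :=
  Matrix.GeneralLinearGroup.mkOfDetNeZero !![(1:F),c;-c,-1] (by
    simp only [Matrix.det_fin_two_of]
    intro h; exact hc1 (by linear_combination h))

private def m4 (c d : F) (hcd : c^2 + d^2 ≠ 1) : GL (Fin 2) F :=
  Matrix.GeneralLinearGroup.mkOfDetNeZero !![c,d+1;d-1,-c] (by
    simp only [Matrix.det_fin_two_of]
    intro h; exact hcd (by linear_combination -h))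

private def m5 (d : F) (hd1 : d^2 ≠ 1) : GL (Fin 2) F :=
  Matrix.GeneralLinearGroup.mkOfDetNeZero !![(0:F),1+d;1-d,0] (by
    simp only [Matrix.det_fin_two_of]
    intro h; exact hd1 (by linear_combination h))

theorem not_perfect_aux (h2 : (2:F) ≠ 0) (c d : F) (hc0 : c ≠ 0) (hd0 : d ≠ 0)
    (hc1 : c^2 ≠ 1) (hd1 : d^2 ≠ 1) (hcd : c^2 + d^2 ≠ 1) :
    ¬ (commGraph (GL (Fin 2) F ⧸
        Subgroup.center (GL (Fin 2) F))).IsPerfectGraph := by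
  classical
  intro hperf
  set Q := GL (Fin 2) F ⧸ Subgroup.center (GL (Fin 2) F) with hQ
  let M : Fin 5 → GL (Fin 2) F := ![m1 F, m2 F, m3 c hc1, m4 c d hcd, m5 d hd1]
  -- values
  have v1 : ((m1 F : GL (Fin 2) F) : Matrix (Fin 2) (Fin 2) F) = !![(1:F),0;0,-1] := rfl
  have v2 : ((m2 F : GL (Fin 2) F) : Matrix (Fin 2) (Fin 2) F) = !![(0:F),1;1,0] := rfl
  have v3 : ((m3 c hc1 : GL (Fin 2) F) : Matrix (Fin 2) (Fin 2) F) = !![(1:F),c;-c,-1] := rfl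
  have v4 : ((m4 c d hcd : GL (Fin 2) F) : Matrix (Fin 2) (Fin 2) F) = !![c,d+1;d-1,-c] := rfl
  have v5 : ((m5 d hd1 : GL (Fin 2) F) : Matrix (Fin 2) (Fin 2) F) = !![(0:F),1+d;1-d,0] := rfl
  have comm12 : Commute (QuotientGroup.mk (M 0) : Q) (QuotientGroup.mk (M 1)) := by
    apply commute_of_anticomm
    rw [show ((M 0 : GL (Fin 2) F) : Matrix (Fin 2) (Fin 2) F) = _ from v1,
        show ((M 1 : GL (Fin 2) F) : Matrix (Fin 2) (Fin 2) F) = _ from v2]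
    ext a b
    fin_cases a <;> fin_cases b <;> simp [Matrix.mul_apply, Fin.sum_univ_two] <;> ring
  have comm23 : Commute (QuotientGroup.mk (M 1) : Q) (QuotientGroup.mk (M 2)) := by
    apply commute_of_anticomm
    rw [show ((M 1 : GL (Fin 2) F) : Matrix (Fin 2) (Fin 2) F) = _ from v2,
        show ((M 2 : GL (Fin 2) F) : Matrix (Fin 2) (Fin 2) F) = _ from v3]
    ext a b
    fin_cases a <;> fin_cases b <;> simp [Matrix.mul_apply, Fin.sum_univ_two] <;> ring
  have comm34 : Commute (QuotientGroup.mk (M 2) : Q) (QuotientGroup.mk (M 3)) := by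
    apply commute_of_anticomm
    rw [show ((M 2 : GL (Fin 2) F) : Matrix (Fin 2) (Fin 2) F) = _ from v3,
        show ((M 3 : GL (Fin 2) F) : Matrix (Fin 2) (Fin 2) F) = _ from v4]
    ext a b
    fin_cases a <;> fin_cases b <;> simp [Matrix.mul_apply, Fin.sum_univ_two] <;> ring
  have comm45 : Commute (QuotientGroup.mk (M 3) : Q) (QuotientGroup.mk (M 4)) := by
    apply commute_of_anticomm
    rw [show ((M 3 : GL (Fin 2) F) : Matrix (Fin 2) (Fin 2) F) = _ from v4,
        show ((M 4 : GL (Fin 2) F) : Matrix (Fin 2) (Fin 2) F) = _ from v5]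
    ext a b
    fin_cases a <;> fin_cases b <;> simp [Matrix.mul_apply, Fin.sum_univ_two] <;> ring
  have comm51 : Commute (QuotientGroup.mk (M 4) : Q) (QuotientGroup.mk (M 0)) := by
    apply commute_of_anticomm
    rw [show ((M 4 : GL (Fin 2) F) : Matrix (Fin 2) (Fin 2) F) = _ from v5,
        show ((M 0 : GL (Fin 2) F) : Matrix (Fin 2) (Fin 2) F) = _ from v1]
    ext a b
    fin_cases a <;> fin_cases b <;> simp [Matrix.mul_apply, Fin.sum_univ_two] <;> ring
  have ne12 : (QuotientGroup.mk (M 0) : Q) ≠ QuotientGroup.mk (M 1) := by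
    intro h
    obtain ⟨a, ha⟩ := quot_eq_scalar h2 _ _ h
    rw [show ((M 0 : GL (Fin 2) F) : Matrix (Fin 2) (Fin 2) F) = _ from v1,
        show ((M 1 : GL (Fin 2) F) : Matrix (Fin 2) (Fin 2) F) = _ from v2] at ha
    have e1 := congrFun (congrFun ha 0) 1
    simp [Matrix.smul_apply] at e1
  have ne13 : (QuotientGroup.mk (M 0) : Q) ≠ QuotientGroup.mk (M 2) := by
    intro h
    obtain ⟨a, ha⟩ := quot_eq_scalar h2 _ _ h
    rw [show ((M 0 : GL (Fin 2) F) : Matrix (Fin 2) (Fin 2) F) = _ from v1,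
        show ((M 2 : GL (Fin 2) F) : Matrix (Fin 2) (Fin 2) F) = _ from v3] at ha
    have e1 := congrFun (congrFun ha 0) 1
    simp [Matrix.smul_apply] at e1
    exact hc0 e1
  have ne14 : (QuotientGroup.mk (M 0) : Q) ≠ QuotientGroup.mk (M 3) := by
    intro h
    obtain ⟨a, ha⟩ := quot_eq_scalar h2 _ _ h
    rw [show ((M 0 : GL (Fin 2) F) : Matrix (Fin 2) (Fin 2) F) = _ from v1,
        show ((M 3 : GL (Fin 2) F) : Matrix (Fin 2) (Fin 2) F) = _ from v4] at ha
    have e1 := congrFun (congrFun ha 0) 1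
    simp [Matrix.smul_apply] at e1
    exact hd1 (by linear_combination (d-1) * e1)
  have ne15 : (QuotientGroup.mk (M 0) : Q) ≠ QuotientGroup.mk (M 4) := by
    intro h
    obtain ⟨a, ha⟩ := quot_eq_scalar h2 _ _ h
    rw [show ((M 0 : GL (Fin 2) F) : Matrix (Fin 2) (Fin 2) F) = _ from v1,
        show ((M 4 : GL (Fin 2) F) : Matrix (Fin 2) (Fin 2) F) = _ from v5] at ha
    have e1 := congrFun (congrFun ha 0) 1
    simp [Matrix.smul_apply] at e1
    exact hd1 (by linear_combination (d-1) * e1)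
  have ne23 : (QuotientGroup.mk (M 1) : Q) ≠ QuotientGroup.mk (M 2) := by
    intro h
    obtain ⟨a, ha⟩ := quot_eq_scalar h2 _ _ h
    rw [show ((M 1 : GL (Fin 2) F) : Matrix (Fin 2) (Fin 2) F) = _ from v2,
        show ((M 2 : GL (Fin 2) F) : Matrix (Fin 2) (Fin 2) F) = _ from v3] at ha
    have e1 := congrFun (congrFun ha 0) 0
    simp [Matrix.smul_apply] at e1
  have ne24 : (QuotientGroup.mk (M 1) : Q) ≠ QuotientGroup.mk (M 3) := by
    intro h
    obtain ⟨a, ha⟩ := quot_eq_scalar h2 _ _ h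
    rw [show ((M 1 : GL (Fin 2) F) : Matrix (Fin 2) (Fin 2) F) = _ from v2,
        show ((M 3 : GL (Fin 2) F) : Matrix (Fin 2) (Fin 2) F) = _ from v4] at ha
    have e1 := congrFun (congrFun ha 0) 0
    simp [Matrix.smul_apply] at e1
    exact hc0 e1
  have ne25 : (QuotientGroup.mk (M 1) : Q) ≠ QuotientGroup.mk (M 4) := by
    intro h
    obtain ⟨a, ha⟩ := quot_eq_scalar h2 _ _ h
    rw [show ((M 1 : GL (Fin 2) F) : Matrix (Fin 2) (Fin 2) F) = _ from v2,
        show ((M 4 : GL (Fin 2) F) : Matrix (Fin 2) (Fin 2) F) = _ from v5] at ha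
    have e1 := congrFun (congrFun ha 0) 1
    simp [Matrix.smul_apply] at e1
    have e2 := congrFun (congrFun ha 1) 0
    simp [Matrix.smul_apply] at e2
    exact hd0 (half_cancel h2 (by linear_combination e1 - e2))
  have ne34 : (QuotientGroup.mk (M 2) : Q) ≠ QuotientGroup.mk (M 3) := by
    intro h
    obtain ⟨a, ha⟩ := quot_eq_scalar h2 _ _ h
    rw [show ((M 2 : GL (Fin 2) F) : Matrix (Fin 2) (Fin 2) F) = _ from v3,
        show ((M 3 : GL (Fin 2) F) : Matrix (Fin 2) (Fin 2) F) = _ from v4] at ha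
    have e1 := congrFun (congrFun ha 0) 1
    simp [Matrix.smul_apply] at e1
    have e2 := congrFun (congrFun ha 1) 0
    simp [Matrix.smul_apply] at e2
    exact hd0 (half_cancel h2 (by linear_combination e1 + e2))
  have ne35 : (QuotientGroup.mk (M 2) : Q) ≠ QuotientGroup.mk (M 4) := by
    intro h
    obtain ⟨a, ha⟩ := quot_eq_scalar h2 _ _ h
    rw [show ((M 2 : GL (Fin 2) F) : Matrix (Fin 2) (Fin 2) F) = _ from v3,
        show ((M 4 : GL (Fin 2) F) : Matrix (Fin 2) (Fin 2) F) = _ from v5] at ha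
    have e1 := congrFun (congrFun ha 0) 0
    simp [Matrix.smul_apply] at e1
    have e2 := congrFun (congrFun ha 0) 1
    simp [Matrix.smul_apply] at e2
    exact hd1 (by linear_combination (d-1) * (e2 - c * e1))
  have ne45 : (QuotientGroup.mk (M 3) : Q) ≠ QuotientGroup.mk (M 4) := by
    intro h
    obtain ⟨a, ha⟩ := quot_eq_scalar h2 _ _ h
    rw [show ((M 3 : GL (Fin 2) F) : Matrix (Fin 2) (Fin 2) F) = _ from v4,
        show ((M 4 : GL (Fin 2) F) : Matrix (Fin 2) (Fin 2) F) = _ from v5] at ha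
    have e1 := congrFun (congrFun ha 0) 0
    simp [Matrix.smul_apply] at e1
    have e2 := congrFun (congrFun ha 0) 1
    simp [Matrix.smul_apply] at e2
    rcases e1 with h' | h'
    · exact hd1 (by linear_combination (d-1) * e2 + (d^2-1) * h')
    · exact hc0 h'
  have nc13 : ¬ Commute (QuotientGroup.mk (M 0) : Q) (QuotientGroup.mk (M 2)) := by
    intro h
    rcases commute_cases h2 _ _ h with hm | hm <;>
      rw [show ((M 0 : GL (Fin 2) F) : Matrix (Fin 2) (Fin 2) F) = _ from v1,
        show ((M 2 : GL (Fin 2) F) : Matrix (Fin 2) (Fin 2) F) = _ from v3] at hm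
    · have e := congrFun (congrFun hm 0) 1
      simp [Matrix.mul_apply, Fin.sum_univ_two] at e
      exact hc0 (half_cancel h2 (by linear_combination -e))
    · have e := congrFun (congrFun hm 0) 0
      simp [Matrix.mul_apply, Fin.sum_univ_two] at e
      exact h2 (by linear_combination e)
  have nc14 : ¬ Commute (QuotientGroup.mk (M 0) : Q) (QuotientGroup.mk (M 3)) := by
    intro h
    rcases commute_cases h2 _ _ h with hm | hm <;>
      rw [show ((M 0 : GL (Fin 2) F) : Matrix (Fin 2) (Fin 2) F) = _ from v1,
        show ((M 3 : GL (Fin 2) F) : Matrix (Fin 2) (Fin 2) F) = _ from v4] at hm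
    · have e := congrFun (congrFun hm 0) 1
      simp [Matrix.mul_apply, Fin.sum_univ_two] at e
      have h' : d + 1 = 0 := half_cancel h2 (by linear_combination -e)
      exact hd1 (by linear_combination (d-1) * h')
    · have e := congrFun (congrFun hm 0) 0
      simp [Matrix.mul_apply, Fin.sum_univ_two] at e
      exact hc0 (half_cancel h2 (by linear_combination e))
  have nc24 : ¬ Commute (QuotientGroup.mk (M 1) : Q) (QuotientGroup.mk (M 3)) := by
    intro h
    rcases commute_cases h2 _ _ h with hm | hm <;>
      rw [show ((M 1 : GL (Fin 2) F) : Matrix (Fin 2) (Fin 2) F) = _ from v2,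
        show ((M 3 : GL (Fin 2) F) : Matrix (Fin 2) (Fin 2) F) = _ from v4] at hm
    · have e := congrFun (congrFun hm 0) 1
      simp [Matrix.mul_apply, Fin.sum_univ_two] at e
      exact hc0 (half_cancel h2 (by linear_combination e))
    · have e := congrFun (congrFun hm 0) 0
      simp [Matrix.mul_apply, Fin.sum_univ_two] at e
      exact hd0 (half_cancel h2 (by linear_combination e))
  have nc25 : ¬ Commute (QuotientGroup.mk (M 1) : Q) (QuotientGroup.mk (M 4)) := by
    intro h
    rcases commute_cases h2 _ _ h with hm | hm <;>
      rw [show ((M 1 : GL (Fin 2) F) : Matrix (Fin 2) (Fin 2) F) = _ from v2,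
        show ((M 4 : GL (Fin 2) F) : Matrix (Fin 2) (Fin 2) F) = _ from v5] at hm
    · have e := congrFun (congrFun hm 0) 0
      simp [Matrix.mul_apply, Fin.sum_univ_two] at e
      exact hd0 (half_cancel h2 (by linear_combination e))
    · have e := congrFun (congrFun hm 0) 0
      simp [Matrix.mul_apply, Fin.sum_univ_two] at e
      exact h2 (by linear_combination e)
  have nc35 : ¬ Commute (QuotientGroup.mk (M 2) : Q) (QuotientGroup.mk (M 4)) := by
    intro h
    rcases commute_cases h2 _ _ h with hm | hm <;>
      rw [show ((M 2 : GL (Fin 2) F) : Matrix (Fin 2) (Fin 2) F) = _ from v3,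
        show ((M 4 : GL (Fin 2) F) : Matrix (Fin 2) (Fin 2) F) = _ from v5] at hm
    · have e := congrFun (congrFun hm 0) 1
      simp [Matrix.mul_apply, Fin.sum_univ_two] at e
      have h' : d + 1 = 0 := half_cancel h2 (by linear_combination -e)
      exact hd1 (by linear_combination (d-1) * h')
    · have e := congrFun (congrFun hm 0) 0
      simp [Matrix.mul_apply, Fin.sum_univ_two] at e
      have hcd0 : c * d = 0 := half_cancel h2 (by linear_combination e)
      rcases mul_eq_zero.mp hcd0 with h' | h'
      · exact hc0 h'
      · exact hd0 h'
  -- non-centrality of the five images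
  have mkc : ∀ x y : GL (Fin 2) F,
      ¬ Commute (QuotientGroup.mk x : Q) (QuotientGroup.mk y) →
      (QuotientGroup.mk x : Q) ∉ Subgroup.center Q := by
    intro x y hxy hmem
    have hcom : Commute (QuotientGroup.mk y : Q) (QuotientGroup.mk x) :=
      Subgroup.mem_center_iff.mp hmem _
    exact hxy hcom.symm
  have nca : (QuotientGroup.mk (M 0) : Q) ∉ Subgroup.center Q := mkc _ _ nc13
  have ncb : (QuotientGroup.mk (M 1) : Q) ∉ Subgroup.center Q := mkc _ _ nc24
  have ncc : (QuotientGroup.mk (M 2) : Q) ∉ Subgroup.center Q :=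
    mkc _ _ (fun h => nc13 h.symm)
  have ncd : (QuotientGroup.mk (M 3) : Q) ∉ Subgroup.center Q :=
    mkc _ _ (fun h => nc14 h.symm)
  have nce : (QuotientGroup.mk (M 4) : Q) ∉ Subgroup.center Q :=
    mkc _ _ (fun h => nc25 h.symm)
  let f : Fin 5 → {g : Q // g ∉ Subgroup.center Q} :=
    ![⟨_, nca⟩, ⟨_, ncb⟩, ⟨_, ncc⟩, ⟨_, ncd⟩, ⟨_, nce⟩]
  set s : Set {g : Q // g ∉ Subgroup.center Q} := Set.range f with hs
  -- edges of the pentagon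
  have hedge : ∀ i : Fin 5, (commGraph Q).Adj (f i) (f (i + 1)) := by
    intro i
    fin_cases i
    · exact ⟨fun h => ne12 (congrArg Subtype.val h), comm12⟩
    · exact ⟨fun h => ne23 (congrArg Subtype.val h), comm23⟩
    · exact ⟨fun h => ne34 (congrArg Subtype.val h), comm34⟩
    · exact ⟨fun h => ne45 (congrArg Subtype.val h), comm45⟩
    · exact ⟨fun h => ne15 (congrArg Subtype.val h).symm, comm51⟩
  -- adjacency only along the pentagon
  have hadj : ∀ i j : Fin 5, (commGraph Q).Adj (f i) (f j) → (j = i + 1 ∨ i = j + 1) := by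
    intro i j hij
    obtain ⟨hne, hcomm⟩ := hij
    fin_cases i <;> fin_cases j
    · exact absurd rfl hne
    · decide
    · exact absurd hcomm nc13
    · exact absurd hcomm nc14
    · decide
    · decide
    · exact absurd rfl hne
    · decide
    · exact absurd hcomm nc24
    · exact absurd hcomm nc25
    · exact absurd hcomm.symm nc13
    · decide
    · exact absurd rfl hne
    · decide
    · exact absurd hcomm nc35
    · exact absurd hcomm.symm nc14
    · exact absurd hcomm.symm nc24
    · decide
    · exact absurd rfl hne
    · decide
    · decide
    · exact absurd hcomm.symm nc25
    · exact absurd hcomm.symm nc35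
    · decide
    · exact absurd rfl hne
  -- clique number at most two
  have hclique : ((commGraph Q).induce s).cliqueNum ≤ 2 := by
    have tri : ∀ i j k : Fin 5, (j = i + 1 ∨ i = j + 1) → (k = i + 1 ∨ i = k + 1) →
        (k = j + 1 ∨ j = k + 1) → False := by decide
    have hfree : ∀ (n : ℕ) (t : Finset ↥s), ((commGraph Q).induce s).IsNClique n t → n ≤ 2 := by
      intro n t ht
      by_contra hn
      push_neg at hn
      obtain ⟨u, hu, hcard⟩ := Finset.exists_subset_card_eq
        (le_trans hn (ht.card_eq.ge) : 3 ≤ t.card)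
      have h3 : ((commGraph Q).induce s).IsNClique 3 u := ⟨ht.isClique.subset hu, hcard⟩
      obtain ⟨x, y, z, hxy, hxz, hyz, -⟩ := SimpleGraph.is3Clique_iff.mp h3
      obtain ⟨i, hi⟩ := x.2
      obtain ⟨j, hj⟩ := y.2
      obtain ⟨k, hk⟩ := z.2
      have hxy' : (commGraph Q).Adj (f i) (f j) := by rw [hi, hj]; exact hxy
      have hxz' : (commGraph Q).Adj (f i) (f k) := by rw [hi, hk]; exact hxz
      have hyz' : (commGraph Q).Adj (f j) (f k) := by rw [hj, hk]; exact hyz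
      exact tri i j k (hadj i j hxy') (hadj i k hxz') (hadj j k hyz')
    refine csSup_le ⟨0, ∅, SimpleGraph.isNClique_empty.mpr rfl⟩ ?_
    rintro n ⟨t, ht⟩
    exact hfree n t ht
  -- a 2-coloring exists, by perfection
  have hcol : ((commGraph Q).induce s).Colorable 2 := by
    rw [← SimpleGraph.chromaticNumber_le_iff_colorable, hperf s]
    exact_mod_cast hclique
  obtain ⟨C⟩ := hcol
  let w : Fin 5 → ↥s := fun i => ⟨f i, ⟨i, rfl⟩⟩
  have hCne : ∀ i : Fin 5, C (w i) ≠ C (w (i + 1)) := by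
    intro i
    exact C.valid (hedge i)
  have hv : ∀ i : Fin 5, (C (w i)).val < 2 := fun i => (C (w i)).isLt
  have hne' : ∀ i : Fin 5, (C (w i)).val ≠ (C (w (i + 1))).val :=
    fun i h => hCne i (Fin.ext h)
  have a0 : (C (w 0)).val ≠ (C (w 1)).val := hne' 0
  have a1 : (C (w 1)).val ≠ (C (w 2)).val := hne' 1
  have a2 : (C (w 2)).val ≠ (C (w 3)).val := hne' 2
  have a3 : (C (w 3)).val ≠ (C (w 4)).val := hne' 3
  have a4 : (C (w 4)).val ≠ (C (w 0)).val := hne' 4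
  have b0 := hv 0
  have b1 := hv 1
  have b2 := hv 2
  have b3 := hv 3
  have b4 := hv 4
  omega

end PGL2Aux

theorem pgl2_commGraph_not_isPerfect
    (F : Type*) [Field F] [Fintype F] (q : ℕ) (hq : Fintype.card F = q)
    (hodd : Odd q) (hq5 : 5 ≤ q) :
    ¬ (commGraph (Matrix.GeneralLinearGroup (Fin 2) F ⧸
        Subgroup.center (Matrix.GeneralLinearGroup (Fin 2) F))).IsPerfectGraph := by
  have hchar : ringChar F ≠ 2 := by
    intro h
    have heven := FiniteField.even_card_iff_char_two.mp h
    obtain ⟨m, hm⟩ := hodd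
    omega
  have h2 : (2:F) ≠ 0 := by
    intro h
    exact hchar (CharP.ringChar_of_prime_eq_zero Nat.prime_two (by exact_mod_cast h))
  obtain ⟨c, d, hc0, hd0, hc1, hd1, hcd⟩ := PGL2Aux.exists_cd h2 (hq ▸ hq5)
  exact PGL2Aux.not_perfect_aux h2 c d hc0 hd0 hc1 hd1 hcd
end

section
/- Let F be a finite field, let n ≥ 4, and let Z be any central subgroup of SL_n(F). Then the commuting graph of SL_n(F)/Z is not perfect. In particular the commuting graphs of SL_n(F) and of PSL_n(F) are not perfect for all n ≥ 4 and all finite fields F. -/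
open SimpleGraph

section PentagonAux

/-- A graph containing an induced 5-cycle is not perfect. -/
lemma pentagon_not_perfect {V : Type*} {G : SimpleGraph V} (v : Fin 5 → V)
    (hadj : ∀ i j : Fin 5, G.Adj (v i) (v j) ↔ (j = i + 1 ∨ i = j + 1)) :
    ¬ G.IsPerfectGraph := by
  intro hperf
  set s : Set V := Set.range v with hs
  have hmem : ∀ i, v i ∈ s := fun i => ⟨i, rfl⟩
  have key : ∀ a b : ↥s, (G.induce s).Adj a b → ∀ ia ib : Fin 5,
      v ia = ↑a → v ib = ↑b → (ib = ia + 1 ∨ ia = ib + 1) := by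
    intro a b hab ia ib ha hb
    rw [SimpleGraph.comap_adj] at hab
    exact (hadj ia ib).mp (by rw [ha, hb]; exact hab)
  classical
  have hcf : (G.induce s).CliqueFree 3 := by
    intro t ht
    obtain ⟨a, b, c, hab, hac, hbc, hteq⟩ := Finset.card_eq_three.mp ht.card_eq
    rw [hteq] at ht
    have hAab : (G.induce s).Adj a b := ht.isClique (by simp) (by simp) hab
    have hAbc : (G.induce s).Adj b c := ht.isClique (by simp) (by simp) hbc
    have hAac : (G.induce s).Adj a c := ht.isClique (by simp) (by simp) hac
    obtain ⟨ia, ha⟩ := a.2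
    obtain ⟨ib, hb⟩ := b.2
    obtain ⟨ic, hc⟩ := c.2
    have h1 := key a b hAab ia ib ha hb
    have h2 := key b c hAbc ib ic hb hc
    have h3 := key a c hAac ia ic ha hc
    have d1 : ia ≠ ib := fun h => hab (Subtype.ext (by rw [← ha, ← hb, h]))
    have d2 : ib ≠ ic := fun h => hbc (Subtype.ext (by rw [← hb, ← hc, h]))
    have d3 : ia ≠ ic := fun h => hac (Subtype.ext (by rw [← ha, ← hc, h]))
    have dec : ∀ ia ib ic : Fin 5, ia ≠ ib → ib ≠ ic → ia ≠ ic →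
        (ib = ia + 1 ∨ ia = ib + 1) → (ic = ib + 1 ∨ ib = ic + 1) →
        (ic = ia + 1 ∨ ia = ic + 1) → False := by decide
    exact dec ia ib ic d1 d2 d3 h1 h2 h3
  have hclique : (G.induce s).cliqueNum ≤ 2 := by
    unfold SimpleGraph.cliqueNum
    apply csSup_le
    · exact ⟨0, ⟨∅, isNClique_empty.mpr rfl⟩⟩
    · rintro m ⟨t, ht⟩
      by_contra h
      exact (hcf.mono (by omega)) t ht
  have hcol : (G.induce s).Colorable 2 := by
    rw [← SimpleGraph.chromaticNumber_le_iff_colorable, hperf s]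
    exact_mod_cast hclique
  obtain ⟨C⟩ := hcol
  have hne : ∀ i : Fin 5, C ⟨v i, hmem i⟩ ≠ C ⟨v (i + 1), hmem (i + 1)⟩ := by
    intro i
    apply C.valid
    rw [SimpleGraph.comap_adj]
    exact (hadj i (i + 1)).mpr (Or.inl rfl)
  have : ∀ f : Fin 5 → Fin 2, ¬ (∀ i : Fin 5, f i ≠ f (i + 1)) := by decide
  exact this (fun i => C ⟨v i, hmem i⟩) hne

end PentagonAux

section MatrixAux

open Matrix

variable {F : Type*} [Field F] {n : ℕ}

/-- The transvection `1 + E i j` as an element of `SL_n`. -/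
def Tv (i j : Fin n) (h : i ≠ j) : Matrix.SpecialLinearGroup (Fin n) F :=
  ⟨Matrix.transvection i j 1, Matrix.det_transvection_of_ne i j h 1⟩

lemma commute_transvection {i j k l : Fin n} (hij : i ≠ j) (hkl : k ≠ l)
    (hjk : j ≠ k) (hli : l ≠ i) :
    Commute (Tv (F := F) i j hij) (Tv k l hkl) := by
  apply Subtype.ext
  rw [Matrix.SpecialLinearGroup.coe_mul, Matrix.SpecialLinearGroup.coe_mul]
  show Matrix.transvection i j 1 * Matrix.transvection k l 1
      = Matrix.transvection k l 1 * Matrix.transvection i j 1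
  unfold Matrix.transvection
  simp only [add_mul, mul_add, one_mul, mul_one, Matrix.single_mul_single_of_ne, hjk, hli,
    ne_eq, not_false_eq_true]
  abel

variable [Fintype F]

omit [Fintype F] in
lemma eq_mk_entries {Z : Subgroup (Matrix.SpecialLinearGroup (Fin n) F)} [Z.Normal]
    (hZ : Z ≤ Subgroup.center (Matrix.SpecialLinearGroup (Fin n) F))
    {x y : Matrix.SpecialLinearGroup (Fin n) F}
    (h : ((x : Matrix.SpecialLinearGroup (Fin n) F ⧸ Z)) = y) :
    ∃ r : F, ∀ p q, (y : Matrix (Fin n) (Fin n) F) p q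
      = (x : Matrix (Fin n) (Fin n) F) p q * r := by
  rw [QuotientGroup.eq] at h
  obtain ⟨r, -, hr⟩ := Matrix.SpecialLinearGroup.mem_center_iff.mp (hZ h)
  refine ⟨r, fun p q => ?_⟩
  have hxy : y = x * (x⁻¹ * y) := by group
  rw [hxy, Matrix.SpecialLinearGroup.coe_mul, ← hr, Matrix.scalar_apply, Matrix.mul_diagonal]

omit [Fintype F] in
lemma commute_mk_entries {Z : Subgroup (Matrix.SpecialLinearGroup (Fin n) F)} [Z.Normal]
    (hZ : Z ≤ Subgroup.center (Matrix.SpecialLinearGroup (Fin n) F))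
    {x y : Matrix.SpecialLinearGroup (Fin n) F}
    (h : Commute ((x : Matrix.SpecialLinearGroup (Fin n) F ⧸ Z))
      (y : Matrix.SpecialLinearGroup (Fin n) F ⧸ Z)) :
    ∃ r : F, ∀ p q, ((y * x : Matrix.SpecialLinearGroup (Fin n) F) : Matrix (Fin n) (Fin n) F) p q
      = ((x * y : Matrix.SpecialLinearGroup (Fin n) F) : Matrix (Fin n) (Fin n) F) p q * r := by
  apply eq_mk_entries hZ
  exact h

omit [Fintype F] in
lemma not_commute_mk {Z : Subgroup (Matrix.SpecialLinearGroup (Fin n) F)} [Z.Normal]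
    (hZ : Z ≤ Subgroup.center (Matrix.SpecialLinearGroup (Fin n) F))
    (i j l : Fin n) (hij : i ≠ j) (hjl : j ≠ l) (hil : i ≠ l) :
    ¬ Commute ((Tv i j hij : Matrix.SpecialLinearGroup (Fin n) F) :
        Matrix.SpecialLinearGroup (Fin n) F ⧸ Z)
      ((Tv j l hjl : Matrix.SpecialLinearGroup (Fin n) F) :
        Matrix.SpecialLinearGroup (Fin n) F ⧸ Z) := by
  intro h
  obtain ⟨r, hr⟩ := commute_mk_entries hZ h
  have e1 := hr i l
  have e2 := hr l l
  rw [Matrix.SpecialLinearGroup.coe_mul, Matrix.SpecialLinearGroup.coe_mul] at e1 e2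
  simp only [Tv] at e1 e2
  simp only [Matrix.transvection_mul_apply_same, Matrix.transvection_mul_apply_of_ne,
    hij, hjl, hil, hij.symm, hjl.symm, hil.symm, ne_eq, not_false_eq_true] at e1 e2
  simp only [Matrix.transvection, Matrix.add_apply, Matrix.one_apply_eq, Matrix.one_apply_ne,
    Matrix.single_apply_of_ne, Matrix.single_apply_same,
    hij, hjl, hil, hij.symm, hjl.symm, hil.symm, ne_eq, not_false_eq_true, false_and, and_false,
    one_mul, mul_one, zero_add, add_zero, zero_mul, mul_zero] at e1 e2
  exact one_ne_zero (e2.trans e1.symm)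

omit [Fintype F] in
lemma not_commute_mk' {Z : Subgroup (Matrix.SpecialLinearGroup (Fin n) F)} [Z.Normal]
    (hZ : Z ≤ Subgroup.center (Matrix.SpecialLinearGroup (Fin n) F))
    (i j : Fin n) (hij : i ≠ j) :
    ¬ Commute ((Tv i j hij : Matrix.SpecialLinearGroup (Fin n) F) :
        Matrix.SpecialLinearGroup (Fin n) F ⧸ Z)
      ((Tv j i hij.symm : Matrix.SpecialLinearGroup (Fin n) F) :
        Matrix.SpecialLinearGroup (Fin n) F ⧸ Z) := by
  intro h
  obtain ⟨r, hr⟩ := commute_mk_entries hZ h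
  have e1 := hr i j
  have e2 := hr i i
  rw [Matrix.SpecialLinearGroup.coe_mul, Matrix.SpecialLinearGroup.coe_mul] at e1 e2
  simp only [Tv] at e1 e2
  simp only [Matrix.transvection_mul_apply_same, Matrix.transvection_mul_apply_of_ne,
    hij, hij.symm, ne_eq, not_false_eq_true] at e1 e2
  simp only [Matrix.transvection, Matrix.add_apply, Matrix.one_apply_eq, Matrix.one_apply_ne,
    Matrix.single_apply_of_ne, Matrix.single_apply_same,
    hij, hij.symm, ne_eq, not_false_eq_true, false_and, and_false,
    one_mul, mul_one, zero_add, add_zero, zero_mul, mul_zero] at e1 e2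
  rw [← e1, mul_one] at e2
  have h0 : (0 : F) = 1 := add_left_cancel (a := (1 : F)) (by rw [add_zero]; exact e2)
  exact zero_ne_one h0

omit [Fintype F] in
lemma ne_mk {Z : Subgroup (Matrix.SpecialLinearGroup (Fin n) F)} [Z.Normal]
    (hZ : Z ≤ Subgroup.center (Matrix.SpecialLinearGroup (Fin n) F))
    (i j k l : Fin n) (hij : i ≠ j) (hkl : k ≠ l) (hne : ¬ (k = i ∧ l = j)) :
    ((Tv i j hij : Matrix.SpecialLinearGroup (Fin n) F) :
        Matrix.SpecialLinearGroup (Fin n) F ⧸ Z)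
      ≠ ((Tv k l hkl : Matrix.SpecialLinearGroup (Fin n) F) :
        Matrix.SpecialLinearGroup (Fin n) F ⧸ Z) := by
  intro h
  obtain ⟨r, hr⟩ := eq_mk_entries hZ h
  have h0 : ¬ (k = i ∧ l = i) := fun hh => hkl (hh.1.trans hh.2.symm)
  have e1 := hr i i
  have e2 := hr i j
  simp only [Tv] at e1 e2
  simp only [Matrix.transvection, Matrix.add_apply, Matrix.one_apply_eq, Matrix.one_apply_ne,
    Matrix.single_apply_of_ne, Matrix.single_apply_same, hij, hkl, hij.symm,
    hkl.symm, hne, h0, ne_eq, not_false_eq_true, false_and, and_false,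
    one_mul, mul_one, zero_add, add_zero, zero_mul, mul_zero] at e1 e2
  exact one_ne_zero (e1.trans e2.symm)

end MatrixAux

set_option maxHeartbeats 2000000 in
theorem sln_central_quotient_commGraph_not_isPerfect
    (F : Type*) [Field F] [Fintype F] (n : ℕ) (hn : 4 ≤ n)
    (Z : Subgroup (Matrix.SpecialLinearGroup (Fin n) F)) [Z.Normal]
    (hZ : Z ≤ Subgroup.center (Matrix.SpecialLinearGroup (Fin n) F)) :
    ¬ (commGraph (Matrix.SpecialLinearGroup (Fin n) F ⧸ Z)).IsPerfectGraph := by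
  set G := Matrix.SpecialLinearGroup (Fin n) F with hG
  set Q := G ⧸ Z with hQ
  -- indices
  have h0 : 0 < n := by omega
  have h1 : 1 < n := by omega
  have h2 : 2 < n := by omega
  have h3 : 3 < n := by omega
  set i0 : Fin n := ⟨0, h0⟩ with hi0
  set i1 : Fin n := ⟨1, h1⟩ with hi1
  set i2 : Fin n := ⟨2, h2⟩ with hi2
  set i3 : Fin n := ⟨3, h3⟩ with hi3
  have d01 : i0 ≠ i1 := by simp [hi0, hi1, Fin.ext_iff]
  have d02 : i0 ≠ i2 := by simp [hi0, hi2, Fin.ext_iff]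
  have d03 : i0 ≠ i3 := by simp [hi0, hi3, Fin.ext_iff]
  have d12 : i1 ≠ i2 := by simp [hi1, hi2, Fin.ext_iff]
  have d13 : i1 ≠ i3 := by simp [hi1, hi3, Fin.ext_iff]
  have d23 : i2 ≠ i3 := by simp [hi2, hi3, Fin.ext_iff]
  -- the five transvections: (0,1), (0,2), (1,2), (1,0), (2,3)
  set x0 : G := Tv i0 i1 d01 with hx0
  set x1 : G := Tv i0 i2 d02 with hx1
  set x2 : G := Tv i1 i2 d12 with hx2
  set x3 : G := Tv i1 i0 d01.symm with hx3
  set x4 : G := Tv i2 i3 d23 with hx4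
  set a0 : Q := (x0 : Q) with ha0
  set a1 : Q := (x1 : Q) with ha1
  set a2 : Q := (x2 : Q) with ha2
  set a3 : Q := (x3 : Q) with ha3
  set a4 : Q := (x4 : Q) with ha4
  -- edges commute
  have E01 : Commute a0 a1 :=
    (commute_transvection d01 d02 d01.symm d02.symm).map (QuotientGroup.mk' Z)
  have E12 : Commute a1 a2 :=
    (commute_transvection d02 d12 d12.symm d02.symm).map (QuotientGroup.mk' Z)
  have E23 : Commute a2 a3 :=
    (commute_transvection d12 d01.symm d12.symm d01).map (QuotientGroup.mk' Z)
  have E34 : Commute a3 a4 :=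
    (commute_transvection d01.symm d23 d02 d13.symm).map (QuotientGroup.mk' Z)
  have E40 : Commute a4 a0 :=
    (commute_transvection d23 d01 d03.symm d12).map (QuotientGroup.mk' Z)
  -- edges have distinct endpoints
  have D01 : a0 ≠ a1 := ne_mk hZ i0 i1 i0 i2 d01 d02 (fun hh => d12 hh.2.symm)
  have D12 : a1 ≠ a2 := ne_mk hZ i0 i2 i1 i2 d02 d12 (fun hh => d01 hh.1.symm)
  have D23 : a2 ≠ a3 := ne_mk hZ i1 i2 i1 i0 d12 d01.symm (fun hh => d02 hh.2)
  have D34 : a3 ≠ a4 := ne_mk hZ i1 i0 i2 i3 d01.symm d23 (fun hh => d12 hh.1.symm)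
  have D40 : a4 ≠ a0 := ne_mk hZ i2 i3 i0 i1 d23 d01 (fun hh => d02 hh.1)
  -- non-edges do not commute
  have N02 : ¬ Commute a0 a2 := not_commute_mk hZ i0 i1 i2 d01 d12 d02
  have N03 : ¬ Commute a0 a3 := not_commute_mk' hZ i0 i1 d01
  have N31 : ¬ Commute a3 a1 := not_commute_mk hZ i1 i0 i2 d01.symm d02 d12
  have N13 : ¬ Commute a1 a3 := fun h => N31 h.symm
  have N14 : ¬ Commute a1 a4 := not_commute_mk hZ i0 i2 i3 d02 d23 d03
  have N24 : ¬ Commute a2 a4 := not_commute_mk hZ i1 i2 i3 d12 d23 d13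
  have W4 : ¬ Commute a4 ((Tv i3 i0 d03.symm : G) : Q) :=
    not_commute_mk hZ i2 i3 i0 d23 d03.symm d02.symm
  -- the five vertices are non-central
  have hc0 : a0 ∉ Subgroup.center Q :=
    fun hm => N02 ((Subgroup.mem_center_iff.mp hm a2).symm)
  have hc1 : a1 ∉ Subgroup.center Q :=
    fun hm => N14 ((Subgroup.mem_center_iff.mp hm a4).symm)
  have hc2 : a2 ∉ Subgroup.center Q :=
    fun hm => N24 ((Subgroup.mem_center_iff.mp hm a4).symm)
  have hc3 : a3 ∉ Subgroup.center Q :=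
    fun hm => N13 (Subgroup.mem_center_iff.mp hm a1)
  have hc4 : a4 ∉ Subgroup.center Q :=
    fun hm => W4 ((Subgroup.mem_center_iff.mp hm _).symm)
  -- assemble the pentagon
  set v : Fin 5 → {g : Q // g ∉ Subgroup.center Q} :=
    ![⟨a0, hc0⟩, ⟨a1, hc1⟩, ⟨a2, hc2⟩, ⟨a3, hc3⟩, ⟨a4, hc4⟩] with hv
  apply pentagon_not_perfect v
  intro i j
  fin_cases i <;> fin_cases j <;>
    simp only [hv, Matrix.cons_val_zero, Matrix.cons_val_one, Matrix.head_cons,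
      Matrix.cons_val_two, Matrix.tail_cons, Matrix.cons_val_three, Matrix.cons_val_four,
      Fin.mk_zero, Fin.mk_one] <;>
    first
      | exact iff_of_false (fun hh => hh.1 rfl) (by decide)
      | exact iff_of_true ⟨fun hh => D01 (congrArg Subtype.val hh), E01⟩ (by decide)
      | exact iff_of_true ⟨fun hh => D01 (congrArg Subtype.val hh).symm, E01.symm⟩ (by decide)
      | exact iff_of_true ⟨fun hh => D12 (congrArg Subtype.val hh), E12⟩ (by decide)
      | exact iff_of_true ⟨fun hh => D12 (congrArg Subtype.val hh).symm, E12.symm⟩ (by decide)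
      | exact iff_of_true ⟨fun hh => D23 (congrArg Subtype.val hh), E23⟩ (by decide)
      | exact iff_of_true ⟨fun hh => D23 (congrArg Subtype.val hh).symm, E23.symm⟩ (by decide)
      | exact iff_of_true ⟨fun hh => D34 (congrArg Subtype.val hh), E34⟩ (by decide)
      | exact iff_of_true ⟨fun hh => D34 (congrArg Subtype.val hh).symm, E34.symm⟩ (by decide)
      | exact iff_of_true ⟨fun hh => D40 (congrArg Subtype.val hh), E40⟩ (by decide)
      | exact iff_of_true ⟨fun hh => D40 (congrArg Subtype.val hh).symm, E40.symm⟩ (by decide)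
      | exact iff_of_false (fun hh => N02 hh.2) (by decide)
      | exact iff_of_false (fun hh => N02 hh.2.symm) (by decide)
      | exact iff_of_false (fun hh => N03 hh.2) (by decide)
      | exact iff_of_false (fun hh => N03 hh.2.symm) (by decide)
      | exact iff_of_false (fun hh => N13 hh.2) (by decide)
      | exact iff_of_false (fun hh => N13 hh.2.symm) (by decide)
      | exact iff_of_false (fun hh => N14 hh.2) (by decide)
      | exact iff_of_false (fun hh => N14 hh.2.symm) (by decide)
      | exact iff_of_false (fun hh => N24 hh.2) (by decide)
      | exact iff_of_false (fun hh => N24 hh.2.symm) (by decide)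
end

section
/- Let K, L and M be finite non-abelian groups. Then the commuting graph Γ(K × L × M) of the direct product K × L × M is not perfect. -/
open SimpleGraph

private lemma fin2_aux (p q r u v : Fin 2) (h1 : p ≠ q) (h2 : q ≠ r) (h3 : r ≠ u)
    (h4 : u ≠ v) (h5 : v ≠ p) : False := by omega

theorem prod_three_nonabelian_commGraph_not_isPerfect
    (K L M : Type*) [Group K] [Group L] [Group M]
    [Finite K] [Finite L] [Finite M]
    (hK : ∃ x y : K, x * y ≠ y * x)
    (hL : ∃ x y : L, x * y ≠ y * x)
    (hM : ∃ x y : M, x * y ≠ y * x) :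
    ¬ (commGraph (K × L × M)).IsPerfectGraph := by
  classical
  obtain ⟨a, a', ha⟩ := hK
  obtain ⟨b, b', hb⟩ := hL
  obtain ⟨c, c', hc⟩ := hM
  have ha1 : a ≠ 1 := by rintro rfl; simp at ha
  have ha'1 : a' ≠ 1 := by rintro rfl; simp at ha
  have hb1 : b ≠ 1 := by rintro rfl; simp at hb
  have hc1 : c ≠ 1 := by rintro rfl; simp at hc
  set G := K × L × M with hGdef
  have hcen : ∀ (x : K) (y : L) (z : M), ((x, y, z) : G) ∈ Subgroup.center G →
      ∀ (u : K) (v : L) (w : M), x * u = u * x ∧ y * v = v * y ∧ z * w = w * z := by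
    intro x y z hmem u v w
    rw [Subgroup.mem_center_iff] at hmem
    have h := hmem (u, v, w)
    exact ⟨(congrArg Prod.fst h).symm, (congrArg (fun p => p.2.1) h).symm,
      (congrArg (fun p => p.2.2) h).symm⟩
  have n1 : ((a, 1, 1) : G) ∉ Subgroup.center G :=
    fun h => ha ((hcen _ _ _ h a' 1 1).1)
  have n2 : ((1, b, 1) : G) ∉ Subgroup.center G :=
    fun h => hb ((hcen _ _ _ h 1 b' 1).2.1)
  have n3 : ((a', 1, c) : G) ∉ Subgroup.center G :=
    fun h => hc ((hcen _ _ _ h 1 1 c').2.2)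
  have n4 : ((a', b', 1) : G) ∉ Subgroup.center G :=
    fun h => hb (((hcen _ _ _ h 1 b 1).2.1).symm)
  have n5 : ((1, b', c') : G) ∉ Subgroup.center G :=
    fun h => hb (((hcen _ _ _ h 1 b 1).2.1).symm)
  set w1 : {g : G // g ∉ Subgroup.center G} := ⟨(a, 1, 1), n1⟩ with hw1
  set w2 : {g : G // g ∉ Subgroup.center G} := ⟨(1, b, 1), n2⟩ with hw2
  set w3 : {g : G // g ∉ Subgroup.center G} := ⟨(a', 1, c), n3⟩ with hw3
  set w4 : {g : G // g ∉ Subgroup.center G} := ⟨(a', b', 1), n4⟩ with hw4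
  set w5 : {g : G // g ∉ Subgroup.center G} := ⟨(1, b', c'), n5⟩ with hw5
  -- edges of the 5-cycle
  have hcomm : ∀ (x u : K) (y v : L) (z w : M), x*u = u*x → y*v = v*y → z*w = w*z →
      ((x, y, z) : G) * (u, v, w) = (u, v, w) * (x, y, z) := by
    intro x u y v z w h1 h2 h3
    exact Prod.ext h1 (Prod.ext h2 h3)
  have e12 : (commGraph G).Adj w1 w2 := by
    refine ⟨fun h => ha1 (congrArg (fun p => p.1.1) h), ?_⟩
    exact hcomm _ _ _ _ _ _ (by simp) (by simp) (by simp)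
  have e23 : (commGraph G).Adj w2 w3 := by
    refine ⟨fun h => ha'1 (congrArg (fun p => p.1.1) h).symm, ?_⟩
    exact hcomm _ _ _ _ _ _ (by simp) (by simp) (by simp)
  have e34 : (commGraph G).Adj w3 w4 := by
    refine ⟨fun h => hc1 (congrArg (fun p => p.1.2.2) h), ?_⟩
    exact hcomm _ _ _ _ _ _ (by simp) (by simp) (by simp)
  have e45 : (commGraph G).Adj w4 w5 := by
    refine ⟨fun h => ha'1 (congrArg (fun p => p.1.1) h), ?_⟩
    exact hcomm _ _ _ _ _ _ (by simp) (by simp) (by simp)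
  have e51 : (commGraph G).Adj w5 w1 := by
    refine ⟨fun h => ha1 (congrArg (fun p => p.1.1) h).symm, ?_⟩
    exact hcomm _ _ _ _ _ _ (by simp) (by simp) (by simp)
  -- non-edges
  have ne13 : ¬ (commGraph G).Adj w1 w3 := by
    rintro ⟨-, h⟩; exact ha (congrArg Prod.fst h)
  have ne14 : ¬ (commGraph G).Adj w1 w4 := by
    rintro ⟨-, h⟩; exact ha (congrArg Prod.fst h)
  have ne24 : ¬ (commGraph G).Adj w2 w4 := by
    rintro ⟨-, h⟩; exact hb (congrArg (fun p => p.2.1) h)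
  have ne25 : ¬ (commGraph G).Adj w2 w5 := by
    rintro ⟨-, h⟩; exact hb (congrArg (fun p => p.2.1) h)
  have ne35 : ¬ (commGraph G).Adj w3 w5 := by
    rintro ⟨-, h⟩; exact hc (congrArg (fun p => p.2.2) h)
  set s : Set {g : G // g ∉ Subgroup.center G} := {w1, w2, w3, w4, w5} with hs
  intro hperf
  have heq := hperf s
  -- the induced graph has no triangle
  have hclq : ((commGraph G).induce s).cliqueNum ≤ 2 := by
    refine csSup_le ?_ ?_
    · exact ⟨0, ∅, isNClique_empty.mpr rfl⟩
    rintro n ⟨t, ht⟩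
    by_contra hn
    push_neg at hn
    obtain ⟨t', ht'sub, ht'card⟩ := Finset.exists_subset_card_eq
      (show 3 ≤ t.card by rw [ht.card_eq]; omega)
    rw [Finset.card_eq_three] at ht'card
    obtain ⟨A, B, C, hAB, hAC, hBC, ht'eq⟩ := ht'card
    have hcl := ht.isClique
    have hadjAB : ((commGraph G).induce s).Adj A B :=
      hcl (ht'sub (by rw [ht'eq]; simp)) (ht'sub (by rw [ht'eq]; simp)) hAB
    have hadjAC : ((commGraph G).induce s).Adj A C :=
      hcl (ht'sub (by rw [ht'eq]; simp)) (ht'sub (by rw [ht'eq]; simp)) hAC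
    have hadjBC : ((commGraph G).induce s).Adj B C :=
      hcl (ht'sub (by rw [ht'eq]; simp)) (ht'sub (by rw [ht'eq]; simp)) hBC
    obtain ⟨x, hx⟩ := A
    obtain ⟨y, hy⟩ := B
    obtain ⟨z, hz⟩ := C
    have hxy : (commGraph G).Adj x y := hadjAB
    have hxz : (commGraph G).Adj x z := hadjAC
    have hyz : (commGraph G).Adj y z := hadjBC
    clear hadjAB hadjAC hadjBC hAB hAC hBC ht'eq ht'sub hcl ht
    simp only [hs, Set.mem_insert_iff, Set.mem_singleton_iff] at hx hy hz
    rcases hx with rfl | rfl | rfl | rfl | rfl <;>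
      rcases hy with rfl | rfl | rfl | rfl | rfl <;>
      rcases hz with rfl | rfl | rfl | rfl | rfl <;>
      first
        | exact (commGraph G).irrefl hxy
        | exact (commGraph G).irrefl hxz
        | exact (commGraph G).irrefl hyz
        | exact ne13 hxy | exact ne13 hxy.symm
        | exact ne13 hxz | exact ne13 hxz.symm
        | exact ne13 hyz | exact ne13 hyz.symm
        | exact ne14 hxy | exact ne14 hxy.symm
        | exact ne14 hxz | exact ne14 hxz.symm
        | exact ne14 hyz | exact ne14 hyz.symm
        | exact ne24 hxy | exact ne24 hxy.symm
        | exact ne24 hxz | exact ne24 hxz.symm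
        | exact ne24 hyz | exact ne24 hyz.symm
        | exact ne25 hxy | exact ne25 hxy.symm
        | exact ne25 hxz | exact ne25 hxz.symm
        | exact ne25 hyz | exact ne25 hyz.symm
        | exact ne35 hxy | exact ne35 hxy.symm
        | exact ne35 hxz | exact ne35 hxz.symm
        | exact ne35 hyz | exact ne35 hyz.symm
  -- the induced graph is not 2-colorable
  have hncol : ¬ ((commGraph G).induce s).Colorable 2 := by
    rintro ⟨co⟩
    have m1 : w1 ∈ s := by simp [hs]
    have m2 : w2 ∈ s := by simp [hs]
    have m3 : w3 ∈ s := by simp [hs]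
    have m4 : w4 ∈ s := by simp [hs]
    have m5 : w5 ∈ s := by simp [hs]
    exact fin2_aux (co ⟨w1, m1⟩) (co ⟨w2, m2⟩) (co ⟨w3, m3⟩) (co ⟨w4, m4⟩) (co ⟨w5, m5⟩)
      (co.valid e12) (co.valid e23) (co.valid e34) (co.valid e45) (co.valid e51)
  have hle : ((commGraph G).induce s).chromaticNumber ≤ (2 : ℕ) := by
    rw [heq]
    exact_mod_cast Nat.cast_le.mpr hclq
  exact hncol (chromaticNumber_le_iff_colorable.mp hle)
end

section
/- Let G be a finite group and let K, L, M be three distinct non-abelian subgroups of G, each of which centralizes the other two (i.e., every element of any one of them commutes with every element of the other two). Then the commuting graph Γ(G) is not perfect. -/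
open SimpleGraph

section Aux

variable {G : Type*} [Group G]

lemma cancel_r {a f x : G} (hfx : Commute f x) (h : Commute (a * f) x) :
    Commute a x := by
  have h1 : a * x * f = x * a * f := by
    calc a * x * f = a * (x * f) := by rw [mul_assoc]
      _ = a * (f * x) := by rw [hfx.eq]
      _ = a * f * x := by rw [mul_assoc]
      _ = x * (a * f) := h.eq
      _ = x * a * f := by rw [mul_assoc]
  exact mul_right_cancel h1

lemma cancel_l {b f y : G} (hby : Commute b y) (h : Commute (b * f) y) :
    Commute f y := by
  have h1 : b * (f * y) = b * (y * f) := by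
    calc b * (f * y) = b * f * y := (mul_assoc _ _ _).symm
      _ = y * (b * f) := h.eq
      _ = y * b * f := (mul_assoc _ _ _).symm
      _ = b * y * f := by rw [hby.symm.eq]
      _ = b * (y * f) := mul_assoc _ _ _
  exact mul_left_cancel h1

lemma ncen {x y : G} (h : ¬ Commute x y) : x ∉ Subgroup.center G :=
  fun hc => h ((Subgroup.mem_center_iff.mp hc y).symm)

theorem aux_not_perfect [Finite G] (a b c d e f : G)
    (hab : ¬ Commute a b) (hcd : ¬ Commute c d) (hef : ¬ Commute e f)
    (hac : Commute a c) (had : Commute a d) (hae : Commute a e) (haf : Commute a f)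
    (hbc : Commute b c) (hbd : Commute b d) (hbe : Commute b e) (hbf : Commute b f)
    (hce : Commute c e) (hcf : Commute c f) (hde : Commute d e) (hdf : Commute d f) :
    ¬ (commGraph G).IsPerfectGraph := by
  -- edges of the 5-cycle  bf - c - a - de - bd - bf
  have e01 : Commute (b * f) c := hbc.mul_left hcf.symm
  have e12 : Commute c a := hac.symm
  have e23 : Commute a (d * e) := had.mul_right hae
  have e34 : Commute (d * e) (b * d) :=
    (hbd.symm.mul_right (Commute.refl d)).mul_left (hbe.symm.mul_right hde.symm)
  have e40 : Commute (b * d) (b * f) :=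
    ((Commute.refl b).mul_right hbf).mul_left (hbd.symm.mul_right hdf)
  -- non-edges
  have n02 : ¬ Commute (b * f) a := fun h => hab (cancel_r haf.symm h).symm
  have n13 : ¬ Commute c (d * e) := fun h => hcd (cancel_r hce.symm h.symm).symm
  have n24 : ¬ Commute a (b * d) := fun h => hab (cancel_r had.symm h.symm).symm
  have n03 : ¬ Commute (b * f) (d * e) := fun h =>
    hef (cancel_l hdf (cancel_l (hbd.mul_right hbe) h).symm)
  have n14 : ¬ Commute c (b * d) := fun h => hcd (cancel_l hbc h.symm).symm
  -- the five vertices, made opaque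
  obtain ⟨v0, hv0⟩ : ∃ v : {g : G // g ∉ Subgroup.center G}, (v : G) = b * f :=
    ⟨⟨_, ncen n02⟩, rfl⟩
  obtain ⟨v1, hv1⟩ : ∃ v : {g : G // g ∉ Subgroup.center G}, (v : G) = c :=
    ⟨⟨_, ncen n13⟩, rfl⟩
  obtain ⟨v2, hv2⟩ : ∃ v : {g : G // g ∉ Subgroup.center G}, (v : G) = a :=
    ⟨⟨_, ncen n24⟩, rfl⟩
  obtain ⟨v3, hv3⟩ : ∃ v : {g : G // g ∉ Subgroup.center G}, (v : G) = d * e :=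
    ⟨⟨_, ncen (fun h => n13 h.symm)⟩, rfl⟩
  obtain ⟨v4, hv4⟩ : ∃ v : {g : G // g ∉ Subgroup.center G}, (v : G) = b * d :=
    ⟨⟨_, ncen (fun h => n14 h.symm)⟩, rfl⟩
  -- distinctness along edges
  have d01 : v0 ≠ v1 := fun h => n02 (by rw [← hv0, h, hv1]; exact e12)
  have d12 : v1 ≠ v2 := fun h => n13 (by rw [← hv1, h, hv2]; exact e23)
  have d23 : v2 ≠ v3 := fun h => n13 (by rw [← hv3, ← h, hv2]; exact e12)
  have d34 : v3 ≠ v4 := fun h => n24 (by rw [← hv4, ← h, hv3]; exact e23)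
  have d40 : v4 ≠ v0 := fun h => n03 (by rw [← hv0, ← h, hv4]; exact e34.symm)
  intro hP
  have hchrom := hP {v0, v1, v2, v3, v4}
  have : Fintype ↥({v0, v1, v2, v3, v4} : Set {g : G // g ∉ Subgroup.center G}) := Fintype.ofFinite _
  -- clique number at most 2
  have hclq : ((commGraph G).induce {v0, v1, v2, v3, v4}).cliqueNum ≤ 2 := by
    by_contra hgt
    push_neg at hgt
    obtain ⟨t, ht⟩ := exists_isNClique_cliqueNum (G := (commGraph G).induce {v0, v1, v2, v3, v4})
    have ht3 : 3 ≤ t.card := by rw [ht.2]; omega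
    have : DecidableEq ↥({v0, v1, v2, v3, v4} : Set {g : G // g ∉ Subgroup.center G}) := Classical.decEq _
    obtain ⟨t', ht't, ht'3⟩ := Finset.exists_subset_card_eq ht3
    obtain ⟨x, y, z, hxy, hxz, hyz, hte⟩ := Finset.card_eq_three.mp ht'3
    rw [hte] at ht't
    have hc := ht.1
    have Axy : (commGraph G).Adj ↑x ↑y := hc (ht't (by simp)) (ht't (by simp)) hxy
    have Axz : (commGraph G).Adj ↑x ↑z := hc (ht't (by simp)) (ht't (by simp)) hxz
    have Ayz : (commGraph G).Adj ↑y ↑z := hc (ht't (by simp)) (ht't (by simp)) hyz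
    have cxy : Commute ((x : {g : G // g ∉ Subgroup.center G}) : G) ((y : _) : G) := Axy.2
    have cxz : Commute ((x : {g : G // g ∉ Subgroup.center G}) : G) ((z : _) : G) := Axz.2
    have cyz : Commute ((y : {g : G // g ∉ Subgroup.center G}) : G) ((z : _) : G) := Ayz.2
    have gx : (x : {g : G // g ∉ Subgroup.center G}) = v0 ∨ ↑x = v1 ∨ ↑x = v2 ∨ ↑x = v3 ∨ ↑x = v4 := by
      simpa only [Set.mem_insert_iff, Set.mem_singleton_iff] using x.2
    have gy : (y : {g : G // g ∉ Subgroup.center G}) = v0 ∨ ↑y = v1 ∨ ↑y = v2 ∨ ↑y = v3 ∨ ↑y = v4 := by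
      simpa only [Set.mem_insert_iff, Set.mem_singleton_iff] using y.2
    have gz : (z : {g : G // g ∉ Subgroup.center G}) = v0 ∨ ↑z = v1 ∨ ↑z = v2 ∨ ↑z = v3 ∨ ↑z = v4 := by
      simpa only [Set.mem_insert_iff, Set.mem_singleton_iff] using z.2
    obtain hX|hX|hX|hX|hX := gx <;> obtain hY|hY|hY|hY|hY := gy <;>
      obtain hZ|hZ|hZ|hZ|hZ := gz <;>
      rw [hX] at cxy cxz <;> rw [hY] at cxy cyz <;> rw [hZ] at cxz cyz <;>
      simp only [hv0, hv1, hv2, hv3, hv4] at cxy cxz cyz <;>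
      first
        | exact Axy.1 (hX.trans hY.symm)
        | exact Axz.1 (hX.trans hZ.symm)
        | exact Ayz.1 (hY.trans hZ.symm)
        | exact n02 cxy | exact n02 cxy.symm
        | exact n13 cxy | exact n13 cxy.symm
        | exact n24 cxy | exact n24 cxy.symm
        | exact n03 cxy | exact n03 cxy.symm
        | exact n14 cxy | exact n14 cxy.symm
        | exact n02 cxz | exact n02 cxz.symm
        | exact n13 cxz | exact n13 cxz.symm
        | exact n24 cxz | exact n24 cxz.symm
        | exact n03 cxz | exact n03 cxz.symm
        | exact n14 cxz | exact n14 cxz.symm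
        | exact n02 cyz | exact n02 cyz.symm
        | exact n13 cyz | exact n13 cyz.symm
        | exact n24 cyz | exact n24 cyz.symm
        | exact n03 cyz | exact n03 cyz.symm
        | exact n14 cyz | exact n14 cyz.symm
  -- hence 2-colorable
  have hcol : ((commGraph G).induce {v0, v1, v2, v3, v4}).Colorable 2 := by
    rw [← SimpleGraph.chromaticNumber_le_iff_colorable, hchrom]
    exact_mod_cast Nat.cast_le.mpr hclq
  obtain ⟨C⟩ := hcol
  have m0 : v0 ∈ ({v0, v1, v2, v3, v4} : Set {g : G // g ∉ Subgroup.center G}) := by simp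
  have m1 : v1 ∈ ({v0, v1, v2, v3, v4} : Set {g : G // g ∉ Subgroup.center G}) := by simp
  have m2 : v2 ∈ ({v0, v1, v2, v3, v4} : Set {g : G // g ∉ Subgroup.center G}) := by simp
  have m3 : v3 ∈ ({v0, v1, v2, v3, v4} : Set {g : G // g ∉ Subgroup.center G}) := by simp
  have m4 : v4 ∈ ({v0, v1, v2, v3, v4} : Set {g : G // g ∉ Subgroup.center G}) := by simp
  have A01 : ((commGraph G).induce {v0, v1, v2, v3, v4}).Adj ⟨v0, m0⟩ ⟨v1, m1⟩ :=
    ⟨d01, by show Commute (v0 : G) (v1 : G); rw [hv0, hv1]; exact e01⟩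
  have A12 : ((commGraph G).induce {v0, v1, v2, v3, v4}).Adj ⟨v1, m1⟩ ⟨v2, m2⟩ :=
    ⟨d12, by show Commute (v1 : G) (v2 : G); rw [hv1, hv2]; exact e12⟩
  have A23 : ((commGraph G).induce {v0, v1, v2, v3, v4}).Adj ⟨v2, m2⟩ ⟨v3, m3⟩ :=
    ⟨d23, by show Commute (v2 : G) (v3 : G); rw [hv2, hv3]; exact e23⟩
  have A34 : ((commGraph G).induce {v0, v1, v2, v3, v4}).Adj ⟨v3, m3⟩ ⟨v4, m4⟩ :=
    ⟨d34, by show Commute (v3 : G) (v4 : G); rw [hv3, hv4]; exact e34⟩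
  have A40 : ((commGraph G).induce {v0, v1, v2, v3, v4}).Adj ⟨v4, m4⟩ ⟨v0, m0⟩ :=
    ⟨d40, by show Commute (v4 : G) (v0 : G); rw [hv4, hv0]; exact e40⟩
  have t01 := C.valid A01
  have t12 := C.valid A12
  have t23 := C.valid A23
  have t34 := C.valid A34
  have t40 := C.valid A40
  have b0 := (C ⟨v0, m0⟩).isLt
  have b1 := (C ⟨v1, m1⟩).isLt
  have b2 := (C ⟨v2, m2⟩).isLt
  have b3 := (C ⟨v3, m3⟩).isLt
  have b4 := (C ⟨v4, m4⟩).isLt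
  rw [Fin.ne_iff_vne] at t01 t12 t23 t34 t40
  omega

end Aux

theorem three_centralizing_nonabelian_subgroups_commGraph_not_isPerfect
    (G : Type*) [Group G] [Finite G] (K L M : Subgroup G)
    (hKL : K ≠ L) (hKM : K ≠ M) (hLM : L ≠ M)
    (hK : ∃ x ∈ K, ∃ y ∈ K, x * y ≠ y * x)
    (hL : ∃ x ∈ L, ∃ y ∈ L, x * y ≠ y * x)
    (hM : ∃ x ∈ M, ∃ y ∈ M, x * y ≠ y * x)
    (hKL' : ∀ x ∈ K, ∀ y ∈ L, Commute x y)
    (hKM' : ∀ x ∈ K, ∀ z ∈ M, Commute x z)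
    (hLM' : ∀ y ∈ L, ∀ z ∈ M, Commute y z) :
    ¬ (commGraph G).IsPerfectGraph := by
  obtain ⟨a, haK, b, hbK, hab⟩ := hK
  obtain ⟨c, hcL, d, hdL, hcd⟩ := hL
  obtain ⟨e, heM, f, hfM, hef⟩ := hM
  exact aux_not_perfect a b c d e f hab hcd hef
    (hKL' a haK c hcL) (hKL' a haK d hdL) (hKM' a haK e heM) (hKM' a haK f hfM)
    (hKL' b hbK c hcL) (hKL' b hbK d hdL) (hKM' b hbK e heM) (hKM' b hbK f hfM)
    (hLM' c hcL e heM) (hLM' c hcL f hfM) (hLM' d hdL e heM) (hLM' d hdL f hfM)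
end

section
/- Let G be a finite group and let K and L be subgroups of G that centralize one another (every element of K commutes with every element of L). Suppose that the commuting graph Γ(K) contains a 4-chain, i.e. an induced subgraph isomorphic to a path on four vertices, and that L is non-abelian. Then the commuting graph Γ(G) is not perfect. -/
open SimpleGraph

/-- A graph *contains a 4-chain* if it has an induced subgraph isomorphic to the
path graph on four vertices. -/
def SimpleGraph.ContainsFourChain {V : Type*} (Γ : SimpleGraph V) : Prop :=
  ∃ S : Set V, Nonempty (Γ.induce S ≃g pathGraph 4)

/-- A graph containing an induced 5-cycle is not perfect. -/
lemma c5_not_perfect {V : Type*} (Γ : SimpleGraph V) (v1 v2 v3 v4 v5 : V)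
    (a12 : Γ.Adj v1 v2) (a23 : Γ.Adj v2 v3) (a34 : Γ.Adj v3 v4) (a45 : Γ.Adj v4 v5)
    (a51 : Γ.Adj v5 v1)
    (n13 : ¬ Γ.Adj v1 v3) (n14 : ¬ Γ.Adj v1 v4) (n24 : ¬ Γ.Adj v2 v4)
    (n25 : ¬ Γ.Adj v2 v5) (n35 : ¬ Γ.Adj v3 v5) :
    ¬ Γ.IsPerfectGraph := by
  intro hperf
  set s : Set V := {v1, v2, v3, v4, v5} with hs
  have m1 : v1 ∈ s := by simp [hs]
  have m2 : v2 ∈ s := by simp [hs]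
  have m3 : v3 ∈ s := by simp [hs]
  have m4 : v4 ∈ s := by simp [hs]
  have m5 : v5 ∈ s := by simp [hs]
  -- no triangles
  have htri : ∀ (t : Finset s), ¬ (Γ.induce s).IsNClique 3 t := by
    classical
    rintro t ⟨hclq, hcard⟩
    obtain ⟨p, q, r, hpq, hpr, hqr, rfl⟩ := Finset.card_eq_three.mp hcard
    have apq : Γ.Adj ↑p ↑q := hclq (by simp) (by simp) hpq
    have apr : Γ.Adj ↑p ↑r := hclq (by simp) (by simp) hpr
    have aqr : Γ.Adj ↑q ↑r := hclq (by simp) (by simp) hqr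
    have hp := p.2
    have hq := q.2
    have hr := r.2
    simp only [hs, Set.mem_insert_iff, Set.mem_singleton_iff] at hp hq hr
    rcases hp with hp | hp | hp | hp | hp <;> rcases hq with hq | hq | hq | hq | hq <;>
      rcases hr with hr | hr | hr | hr | hr <;>
      rw [hp, hq] at apq <;> rw [hp, hr] at apr <;> rw [hq, hr] at aqr <;>
      first
      | exact Γ.irrefl apq | exact Γ.irrefl apr | exact Γ.irrefl aqr
      | exact n13 apq | exact n13 apr | exact n13 aqr
      | exact n13 apq.symm | exact n13 apr.symm | exact n13 aqr.symm
      | exact n14 apq | exact n14 apr | exact n14 aqr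
      | exact n14 apq.symm | exact n14 apr.symm | exact n14 aqr.symm
      | exact n24 apq | exact n24 apr | exact n24 aqr
      | exact n24 apq.symm | exact n24 apr.symm | exact n24 aqr.symm
      | exact n25 apq | exact n25 apr | exact n25 aqr
      | exact n25 apq.symm | exact n25 apr.symm | exact n25 aqr.symm
      | exact n35 apq | exact n35 apr | exact n35 aqr
      | exact n35 apq.symm | exact n35 apr.symm | exact n35 aqr.symm
  -- not 2-colorable
  have hnc : ¬ (Γ.induce s).Colorable 2 := by
    rintro ⟨C⟩
    have h12 : C ⟨v1, m1⟩ ≠ C ⟨v2, m2⟩ := C.valid a12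
    have h23 : C ⟨v2, m2⟩ ≠ C ⟨v3, m3⟩ := C.valid a23
    have h34 : C ⟨v3, m3⟩ ≠ C ⟨v4, m4⟩ := C.valid a34
    have h45 : C ⟨v4, m4⟩ ≠ C ⟨v5, m5⟩ := C.valid a45
    have h51 : C ⟨v5, m5⟩ ≠ C ⟨v1, m1⟩ := C.valid a51
    have l1 := (C ⟨v1, m1⟩).isLt
    have l2 := (C ⟨v2, m2⟩).isLt
    have l3 := (C ⟨v3, m3⟩).isLt
    have l4 := (C ⟨v4, m4⟩).isLt
    have l5 := (C ⟨v5, m5⟩).isLt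
    have f12 : (C ⟨v1, m1⟩ : Fin 2).val ≠ (C ⟨v2, m2⟩ : Fin 2).val :=
      fun h => h12 (Fin.val_injective h)
    have f23 : (C ⟨v2, m2⟩ : Fin 2).val ≠ (C ⟨v3, m3⟩ : Fin 2).val :=
      fun h => h23 (Fin.val_injective h)
    have f34 : (C ⟨v3, m3⟩ : Fin 2).val ≠ (C ⟨v4, m4⟩ : Fin 2).val :=
      fun h => h34 (Fin.val_injective h)
    have f45 : (C ⟨v4, m4⟩ : Fin 2).val ≠ (C ⟨v5, m5⟩ : Fin 2).val :=
      fun h => h45 (Fin.val_injective h)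
    have f51 : (C ⟨v5, m5⟩ : Fin 2).val ≠ (C ⟨v1, m1⟩ : Fin 2).val :=
      fun h => h51 (Fin.val_injective h)
    omega
  have hcl : (Γ.induce s).cliqueNum ≤ 2 := by
    refine csSup_le' ?_
    rintro n ⟨t, ht⟩
    by_contra hn
    push_neg at hn
    have hcard : 3 ≤ t.card := by rw [ht.card_eq]; omega
    obtain ⟨u, hu, hucard⟩ := Finset.exists_subset_card_eq hcard
    exact htri u ⟨ht.isClique.subset hu, hucard⟩
  have hle : (Γ.induce s).chromaticNumber ≤ (2 : ℕ) := by
    rw [hperf s]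
    exact_mod_cast Nat.cast_le.mpr hcl
  exact hnc (chromaticNumber_le_iff_colorable.mp hle)

/-- From a 4-chain in the commuting graph, extract four group elements with the
path commuting pattern. -/
lemma exists_p4_data (K : Type*) [Group K] (h : (commGraph K).ContainsFourChain) :
    ∃ a b c d : K, Commute a b ∧ Commute b c ∧ Commute c d ∧
      ¬ Commute a c ∧ ¬ Commute a d ∧ ¬ Commute b d ∧ b ≠ c := by
  obtain ⟨S, ⟨φ⟩⟩ := h
  let f : Fin 4 → K := fun i => ((φ.symm i : {g : K // g ∉ Subgroup.center K}) : K)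
  have hedge : ∀ i j : Fin 4, (pathGraph 4).Adj i j → f i ≠ f j ∧ Commute (f i) (f j) := by
    intro i j hij
    have h2 : (commGraph K).Adj (φ.symm i).1 (φ.symm j).1 := φ.symm.map_adj_iff.mpr hij
    exact ⟨fun he => h2.1 (Subtype.ext he), h2.2⟩
  have hnedge : ∀ i j : Fin 4, i ≠ j → ¬ (pathGraph 4).Adj i j → ¬ Commute (f i) (f j) := by
    intro i j hij hna hcomm
    apply hna
    apply φ.symm.map_adj_iff.mp
    exact ⟨fun he => hij (φ.symm.toEquiv.injective (Subtype.ext he)), hcomm⟩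
  refine ⟨f 0, f 1, f 2, f 3, ?_, ?_, ?_, ?_, ?_, ?_, ?_⟩
  · exact (hedge 0 1 (pathGraph_adj.mpr (by decide))).2
  · exact (hedge 1 2 (pathGraph_adj.mpr (by decide))).2
  · exact (hedge 2 3 (pathGraph_adj.mpr (by decide))).2
  · exact hnedge 0 2 (by decide) (fun hh => by have := pathGraph_adj.mp hh; revert this; decide)
  · exact hnedge 0 3 (by decide) (fun hh => by have := pathGraph_adj.mp hh; revert this; decide)
  · exact hnedge 1 3 (by decide) (fun hh => by have := pathGraph_adj.mp hh; revert this; decide)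
  · exact (hedge 1 2 (pathGraph_adj.mpr (by decide))).1

theorem fourChain_centralizing_nonabelian_commGraph_not_isPerfect
    (G : Type*) [Group G] [Finite G] (K L : Subgroup G)
    (hcent : ∀ x ∈ K, ∀ y ∈ L, Commute x y)
    (hchain : (commGraph K).ContainsFourChain)
    (hL : ∃ x ∈ L, ∃ y ∈ L, x * y ≠ y * x) :
    ¬ (commGraph G).IsPerfectGraph := by
  obtain ⟨x, hx, y, hy, hxy⟩ := hL
  have ncomm_xy : ¬ Commute x y := hxy
  obtain ⟨a', b', c', d', kab, kbc, kcd, kac, kad, kbd, kbc_ne⟩ := exists_p4_data ↥K hchain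
  set a : G := (a' : G) with ha
  set b : G := (b' : G) with hb
  set c : G := (c' : G) with hcc
  set d : G := (d' : G) with hdd
  have haK : a ∈ K := a'.2
  have hbK : b ∈ K := b'.2
  have hcK : c ∈ K := c'.2
  have hdK : d ∈ K := d'.2
  have comm_ab : Commute a b := congrArg Subtype.val kab
  have comm_bc : Commute b c := congrArg Subtype.val kbc
  have comm_cd : Commute c d := congrArg Subtype.val kcd
  have ncomm_ac : ¬ Commute a c := fun h => kac (Subtype.ext h)
  have ncomm_ad : ¬ Commute a d := fun h => kad (Subtype.ext h)
  have ncomm_bd : ¬ Commute b d := fun h => kbd (Subtype.ext h)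
  have hbc_ne : b ≠ c := fun h => kbc_ne (Subtype.ext h)
  -- commuting with x, y
  have cax : Commute a x := hcent a haK x hx
  have cbx : Commute b x := hcent b hbK x hx
  have ccx : Commute c x := hcent c hcK x hx
  have cdx : Commute d x := hcent d hdK x hx
  have cay : Commute a y := hcent a haK y hy
  have cby : Commute b y := hcent b hbK y hy
  have ccy : Commute c y := hcent c hcK y hy
  have cdy : Commute d y := hcent d hdK y hy
  -- the five elements of the 5-cycle: c*x, d, y, a, b*x
  have E12 : Commute (c * x) d := comm_cd.mul_left cdx.symm
  have E23 : Commute d y := cdy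
  have E34 : Commute y a := cay.symm
  have E45 : Commute a (b * x) := comm_ab.mul_right cax
  have E51 : Commute (b * x) (c * x) :=
    (comm_bc.mul_right cbx).mul_left (ccx.symm.mul_right (Commute.refl x))
  have N13 : ¬ Commute (c * x) y := by
    intro h
    have h2 : Commute (c⁻¹ * (c * x)) y := ccy.inv_left.mul_left h
    rw [inv_mul_cancel_left] at h2
    exact ncomm_xy h2
  have N14 : ¬ Commute (c * x) a := by
    intro h
    have h2 : Commute ((c * x) * x⁻¹) a := h.mul_left cax.symm.inv_left
    rw [mul_inv_cancel_right] at h2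
    exact ncomm_ac h2.symm
  have N24 : ¬ Commute d a := fun h => ncomm_ad h.symm
  have N25 : ¬ Commute d (b * x) := by
    intro h
    have h2 : Commute d ((b * x) * x⁻¹) := h.mul_right cdx.inv_right
    rw [mul_inv_cancel_right] at h2
    exact ncomm_bd h2.symm
  have N35 : ¬ Commute y (b * x) := by
    intro h
    have h2 : Commute (b⁻¹ * (b * x)) y := cby.inv_left.mul_left h.symm
    rw [inv_mul_cancel_left] at h2
    exact ncomm_xy h2
  -- edge distinctness
  have D12 : c * x ≠ d := by
    intro h
    have hxK : x ∈ K := by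
      have hh : x = c⁻¹ * d := by rw [← h, inv_mul_cancel_left]
      rw [hh]; exact mul_mem (inv_mem hcK) hdK
    exact ncomm_xy (hcent x hxK y hy)
  have D23 : d ≠ y := by
    intro h
    have hyK : y ∈ K := by rw [← h]; exact hdK
    exact ncomm_xy (hcent y hyK x hx).symm
  have D34 : y ≠ a := by
    intro h
    have hyK : y ∈ K := by rw [h]; exact haK
    exact ncomm_xy (hcent y hyK x hx).symm
  have D45 : a ≠ b * x := by
    intro h
    have hxK : x ∈ K := by
      have hh : x = b⁻¹ * a := by rw [h, inv_mul_cancel_left]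
      rw [hh]; exact mul_mem (inv_mem hbK) haK
    exact ncomm_xy (hcent x hxK y hy)
  have D51 : b * x ≠ c * x := fun h => hbc_ne (mul_right_cancel h)
  -- non-centrality
  have nc1 : c * x ∉ Subgroup.center G :=
    fun h => N13 ((Subgroup.mem_center_iff.mp h y).symm)
  have nc2 : d ∉ Subgroup.center G :=
    fun h => N24 ((Subgroup.mem_center_iff.mp h a).symm)
  have nc3 : y ∉ Subgroup.center G :=
    fun h => ncomm_xy (Subgroup.mem_center_iff.mp h x)
  have nc4 : a ∉ Subgroup.center G :=
    fun h => ncomm_ac (show Commute c a from Subgroup.mem_center_iff.mp h c).symm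
  have nc5 : b * x ∉ Subgroup.center G :=
    fun h => N25 (Subgroup.mem_center_iff.mp h d)
  -- assemble the induced 5-cycle
  exact c5_not_perfect (commGraph G) ⟨c * x, nc1⟩ ⟨d, nc2⟩ ⟨y, nc3⟩ ⟨a, nc4⟩ ⟨b * x, nc5⟩
    ⟨fun h => D12 (congrArg Subtype.val h), E12⟩
    ⟨fun h => D23 (congrArg Subtype.val h), E23⟩
    ⟨fun h => D34 (congrArg Subtype.val h), E34⟩
    ⟨fun h => D45 (congrArg Subtype.val h), E45⟩
    ⟨fun h => D51 (congrArg Subtype.val h), E51⟩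
    (fun h => N13 h.2) (fun h => N14 h.2) (fun h => N24 h.2)
    (fun h => N25 h.2) (fun h => N35 h.2)
end
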